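/- arXiv:1212.5738 — 9 statements merged into one kernel-verified Lean document; each statement's English description precedes it below -/
import Mathlib

section
/- Let r ≥ 2 be an integer, let G be an abelian group in which r·g = 0 for every g ∈ G (torsion r), let K ≥ 1 be a real number, and let A be a nonempty finite subset of G. If |A + A| ≤ K·|A|, then the affine span of A is finite and satisfies |⟨A⟩| ≤ K²·r^(K⁴)·|A|. -/
open Pointwise

section Aux

variable {G : Type*} [AddCommGroup G]

private lemma tor_nsmul_mod {r : ℕ} (htor : ∀ g : G, r • g = 0) (n : ℕ) (g : G) :
    n • g = (n % r) • g := by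
  conv_lhs => rw [← Nat.div_add_mod n r]
  rw [add_nsmul, mul_comm, mul_nsmul, htor, zero_add]

private lemma tor_neg_nsmul {r : ℕ} (hr : 2 ≤ r) (htor : ∀ g : G, r • g = 0) (n : ℕ) (g : G) :
    -(n • g) = ((r - 1) * n) • g := by
  obtain ⟨k, rfl⟩ : ∃ k, r = k + 1 := ⟨r - 1, by omega⟩
  rw [neg_eq_iff_add_eq_zero, ← add_nsmul]
  have h : n + (k + 1 - 1) * n = n * (k + 1) := by simp; ring
  rw [h, mul_nsmul, htor]

/-- The set of `Fin r`-combinations of elements of `F` is closed under the group operations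
and has size at most `r ^ F.card`. -/
private lemma exists_T {r : ℕ} (hr : 2 ≤ r) (htor : ∀ g : G, r • g = 0) (F : Finset G) :
    ∃ T : Set G, (F : Set G) ⊆ T ∧ (0 : G) ∈ T ∧ (∀ x ∈ T, -x ∈ T) ∧
      (∀ x ∈ T, ∀ y ∈ T, x + y ∈ T) ∧ T.Finite ∧ Nat.card T ≤ r ^ F.card := by
  classical
  have hr0 : 0 < r := by omega
  set φ : (F → Fin r) → G := fun c => ∑ f : F, ((c f : ℕ) • (f : G)) with hφ
  refine ⟨Set.range φ, ?_, ?_, ?_, ?_, Set.finite_range φ, ?_⟩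
  · -- F ⊆ range φ
    intro g hg
    rw [Finset.mem_coe] at hg
    refine ⟨fun x => if x = ⟨g, hg⟩ then ⟨1, by omega⟩ else ⟨0, hr0⟩, ?_⟩
    simp only [hφ]
    rw [Finset.sum_eq_single (⟨g, hg⟩ : F)]
    · simp
    · intro b _ hb
      simp [hb]
    · intro h
      exact absurd (Finset.mem_univ _) h
  · exact ⟨fun _ => ⟨0, hr0⟩, by simp [hφ]⟩
  · -- neg
    rintro _ ⟨c, rfl⟩
    refine ⟨fun f => ⟨((r - 1) * (c f : ℕ)) % r, Nat.mod_lt _ hr0⟩, ?_⟩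
    simp only [hφ, ← Finset.sum_neg_distrib]
    refine Finset.sum_congr rfl fun f _ => ?_
    rw [← tor_nsmul_mod htor, ← tor_neg_nsmul hr htor]
  · -- add
    rintro _ ⟨c, rfl⟩ _ ⟨c', rfl⟩
    refine ⟨fun f => ⟨((c f : ℕ) + (c' f : ℕ)) % r, Nat.mod_lt _ hr0⟩, ?_⟩
    simp only [hφ, ← Finset.sum_add_distrib]
    refine Finset.sum_congr rfl fun f _ => ?_
    rw [← tor_nsmul_mod htor, add_nsmul]
  · -- card
    have h1 : Nat.card (Set.range φ) ≤ Nat.card (F → Fin r) :=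
      Nat.card_le_card_of_surjective (fun c => ⟨φ c, Set.mem_range_self c⟩)
        (by rintro ⟨_, c, rfl⟩; exact ⟨c, rfl⟩)
    refine h1.trans ?_
    rw [Nat.card_eq_fintype_card, Fintype.card_fun]
    simp

/-- Plünnecke–Ruzsa consequence, real-valued. -/
private lemma plun [DecidableEq G] (B' : Finset G) (hne : B'.Nonempty) {K : ℝ} (hK : 0 ≤ K)
    (hd : ((B' + B').card : ℝ) ≤ K * B'.card) (m n : ℕ) :
    ((m • B' - n • B').card : ℝ) ≤ K ^ (m + n) * B'.card := by
  have h := Finset.pluennecke_ruzsa_inequality_nsmul_sub_nsmul_add hne B' m n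
  have hb : (0 : ℝ) < B'.card := by exact_mod_cast hne.card_pos
  have h' : ((m • B' - n • B').card : ℝ) ≤
      (((B' + B').card : ℝ) / B'.card) ^ (m + n) * B'.card := by
    have h2 : (((m • B' - n • B').card : ℚ≥0) : ℝ) ≤
        (((((B' + B').card : ℚ≥0) / (B'.card : ℚ≥0)) ^ (m + n) * (B'.card : ℚ≥0) : ℚ≥0) : ℝ) :=
      NNRat.cast_le.2 h
    push_cast at h2
    exact_mod_cast h2
  refine h'.trans ?_
  have hq : ((B' + B').card : ℝ) / B'.card ≤ K := by
    rw [div_le_iff₀ hb]; exact hd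
  have hq0 : (0:ℝ) ≤ ((B' + B').card : ℝ) / B'.card := by positivity
  gcongr

end Aux

/-- The affine span of `A`: the smallest coset of a subgroup containing `A`,
realized as the intersection of all such cosets. -/
def affSpan {G : Type*} [AddCommGroup G] (A : Set G) : Set G :=
  ⋂₀ {C : Set G | A ⊆ C ∧ ∃ (H : AddSubgroup G) (g : G), C = g +ᵥ (H : Set G)}

theorem statement1 {G : Type*} [AddCommGroup G] (r : ℕ) (hr : 2 ≤ r)
    (htor : ∀ g : G, r • g = 0) (K : ℝ) (hK : 1 ≤ K)
    (A : Set G) (hfin : A.Finite) (hne : A.Nonempty)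
    (hdouble : ((A + A).ncard : ℝ) ≤ K * A.ncard) :
    (affSpan A).Finite ∧
      ((affSpan A).ncard : ℝ) ≤ K ^ 2 * (r : ℝ) ^ (K ^ 4) * A.ncard := by
  classical
  obtain ⟨a₀, ha₀⟩ := hne
  set B' : Finset G := hfin.toFinset with hB'
  have hBA : (B' : Set G) = A := hfin.coe_toFinset
  have hBne : B'.Nonempty := by
    rw [← Finset.coe_nonempty, hBA]; exact ⟨a₀, ha₀⟩
  have hK0 : (0:ℝ) ≤ K := by linarith
  have hcardA : (A.ncard : ℝ) = B'.card := by rw [← hBA, Set.ncard_coe_finset]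
  have hd : ((B' + B').card : ℝ) ≤ K * B'.card := by
    have h1 : ((B' + B' : Finset G) : Set G) = A + A := by rw [Finset.coe_add, hBA]
    have h2 : ((A + A).ncard : ℝ) = (B' + B').card := by
      rw [← h1, Set.ncard_coe_finset]
    rw [← h2, ← hcardA]; exact hdouble
  -- |A - A| ≤ K^2 |A|
  have hsub : ((B' - B').card : ℝ) ≤ K ^ 2 * B'.card := by
    have h := plun B' hBne hK0 hd 1 1
    rwa [one_nsmul] at h
  -- covering hypothesis
  have hcovh : (((B' + B' - B') + B').card : ℝ) ≤ K ^ 4 * B'.card := by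
    have h := plun B' hBne hK0 hd 3 1
    rw [one_nsmul, show (3:ℕ) = 2 + 1 by norm_num, succ_nsmul,
      show (2:ℕ) = 1 + 1 by norm_num, succ_nsmul, one_nsmul] at h
    rw [sub_add_eq_add_sub]
    exact h
  obtain ⟨F, hFsub, hFcard, hFcov⟩ := Finset.ruzsa_covering_add hBne hcovh
  -- element-level covering
  have hcov' : ∀ a ∈ A, ∀ b ∈ A, ∀ c ∈ A,
      ∃ f ∈ F, ∃ u ∈ A, ∃ v ∈ A, a + b - c = f + (u - v) := by
    intro a ha b hb c hc
    rw [← hBA, Finset.mem_coe] at ha hb hc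
    have hm : a + b - c ∈ B' + B' - B' :=
      Finset.sub_mem_sub (Finset.add_mem_add ha hb) hc
    obtain ⟨f, hf, d, hd', he⟩ := Finset.mem_add.1 (hFcov hm)
    obtain ⟨u, hu, v, hv, he'⟩ := Finset.mem_sub.1 hd'
    refine ⟨f, hf, u, ?_, v, ?_, ?_⟩
    · rw [← hBA]; exact hu
    · rw [← hBA]; exact hv
    · rw [← he, ← he']
  obtain ⟨T, hFT, hT0, hTneg, hTadd, hTfin, hTcard⟩ := exists_T hr htor F
  set S : Set G := T + (A - A) with hS
  have hmemS : ∀ t ∈ T, ∀ u ∈ A, ∀ v ∈ A, t + (u - v) ∈ S := by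
    intro t ht u hu v hv
    exact Set.add_mem_add ht (Set.sub_mem_sub hu hv)
  have hSadd : ∀ x ∈ S, ∀ y ∈ S, x + y ∈ S := by
    intro x hx y hy
    obtain ⟨t₁, ht₁, d₁, hd₁, rfl⟩ := Set.mem_add.1 hx
    obtain ⟨a, ha, b, hb, rfl⟩ := Set.mem_sub.1 hd₁
    obtain ⟨t₂, ht₂, d₂, hd₂, rfl⟩ := Set.mem_add.1 hy
    obtain ⟨c, hc, e, heA, rfl⟩ := Set.mem_sub.1 hd₂
    obtain ⟨f, hf, u, hu, v, hv, e1⟩ := hcov' a ha c hc b hb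
    obtain ⟨f', hf', p, hp, q, hq, e2⟩ := hcov' v hv e heA u hu
    have hfeq : (f : G) = a + c - b - (u - v) := by rw [e1]; abel
    have hfeq' : (f' : G) = v + e - u - (p - q) := by rw [e2]; abel
    have key : (t₁ + (a - b)) + (t₂ + (c - e)) =
        (t₁ + t₂ + f + (-f')) + (q - p) := by
      rw [hfeq, hfeq']; abel
    rw [key]
    refine hmemS _ ?_ q hq p hp
    exact hTadd _ (hTadd _ (hTadd _ ht₁ _ ht₂) _ (hFT hf)) _ (hTneg _ (hFT hf'))
  have hSneg : ∀ x ∈ S, -x ∈ S := by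
    intro x hx
    obtain ⟨t, ht, d, hd', rfl⟩ := Set.mem_add.1 hx
    obtain ⟨a, ha, b, hb, rfl⟩ := Set.mem_sub.1 hd'
    have : -(t + (a - b)) = (-t) + (b - a) := by abel
    rw [this]
    exact hmemS _ (hTneg _ ht) b hb a ha
  have hS0 : (0:G) ∈ S := by
    have : (0:G) = 0 + (a₀ - a₀) := by abel
    rw [this]
    exact hmemS _ hT0 a₀ ha₀ a₀ ha₀
  set SG : AddSubgroup G :=
    { carrier := S
      add_mem' := fun hx hy => hSadd _ hx _ hy
      zero_mem' := hS0
      neg_mem' := fun hx => hSneg _ hx } with hSG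
  -- the coset
  set C : Set G := a₀ +ᵥ (SG : Set G) with hC
  have hAC : A ⊆ C := by
    intro a ha
    refine ⟨a - a₀, ?_, by simp⟩
    show a - a₀ ∈ S
    have : a - a₀ = 0 + (a - a₀) := by abel
    rw [this]
    exact hmemS _ hT0 a ha a₀ ha₀
  have haff : affSpan A ⊆ C := Set.sInter_subset_of_mem ⟨hAC, SG, a₀, rfl⟩
  have hAAfin : (A - A).Finite := hfin.sub hfin
  have hSfin : S.Finite := hTfin.add hAAfin
  have hCfin : C.Finite := hSfin.vadd_set
  refine ⟨hCfin.subset haff, ?_⟩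
  have h1 : (affSpan A).ncard ≤ C.ncard := Set.ncard_le_ncard haff hCfin
  have h2 : C.ncard = S.ncard := Set.ncard_vadd_set a₀ S
  have h3 : S.ncard ≤ Nat.card T * (A - A).ncard := by
    rw [← Nat.card_coe_set_eq, ← Nat.card_coe_set_eq]
    exact Set.natCard_add_le
  have hAAcard : ((A - A).ncard : ℝ) ≤ K ^ 2 * A.ncard := by
    have : ((A - A).ncard : ℝ) = (B' - B').card := by
      rw [← hBA, ← Finset.coe_sub, Set.ncard_coe_finset]
    rw [this, hcardA]
    exact hsub
  have hTr : (Nat.card T : ℝ) ≤ (r : ℝ) ^ (K ^ 4) := by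
    calc (Nat.card T : ℝ) ≤ ((r ^ F.card : ℕ) : ℝ) := by exact_mod_cast hTcard
      _ = (r : ℝ) ^ ((F.card : ℕ) : ℝ) := by
          push_cast
          exact (Real.rpow_natCast _ _).symm
      _ ≤ (r : ℝ) ^ (K ^ 4) := by
          refine Real.rpow_le_rpow_of_exponent_le ?_ hFcard
          exact_mod_cast Nat.one_le_of_lt hr
  calc ((affSpan A).ncard : ℝ) ≤ ((Nat.card T * (A - A).ncard : ℕ) : ℝ) := by
        exact_mod_cast (h1.trans_eq h2).trans h3
    _ = (Nat.card T : ℝ) * ((A - A).ncard : ℝ) := by push_cast; ring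
    _ ≤ ((r : ℝ) ^ (K ^ 4)) * (K ^ 2 * A.ncard) := by
        refine mul_le_mul hTr hAAcard (by positivity) ?_
        positivity
    _ = K ^ 2 * (r : ℝ) ^ (K ^ 4) * A.ncard := by ring
end

section
/- Let r ≥ 3 and m ≥ 1 be integers, and let A = {0, e₁, e₂, …, e_m} ⊆ (ZMod r)^m, where e₁, …, e_m is the standard basis. Then |A| = m + 1, |A + A| = (m+1)(m+2)/2 (so the doubling constant of A equals (m+2)/2), and the affine span of A is all of (ZMod r)^m, which has size r^m. -/
open Pointwise

private def fA (m r : ℕ) (o : Option (Fin m)) : Fin m → ZMod r :=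
  o.elim 0 fun i => Pi.single i 1

private lemma fA_apply {m r : ℕ} (o : Option (Fin m)) (k : Fin m) :
    fA m r o k = ((if some k = o then 1 else 0 : ℕ) : ZMod r) := by
  rcases o with _ | i
  · simp [fA]
  · rcases eq_or_ne k i with rfl | h
    · simp [fA]
    · simp [fA, Pi.single_apply, h]

private lemma sym_inj {m r : ℕ} (hr : 3 ≤ r) (a b c d : Option (Fin m))
    (h : fA m r a + fA m r b = fA m r c + fA m r d) :
    s(a, b) = s(c, d) := by
  haveI : NeZero r := ⟨by omega⟩
  have hcast : ∀ x y : ℕ, x < r → y < r → ((x : ZMod r) = y) → x = y := by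
    intro x y hx hy hxy
    have := congrArg ZMod.val hxy
    rwa [ZMod.val_cast_of_lt hx, ZMod.val_cast_of_lt hy] at this
  have hcnt : ∀ k : Fin m,
      ((if some k = a then 1 else 0) + (if some k = b then 1 else 0) : ℕ)
      = (if some k = c then 1 else 0) + (if some k = d then 1 else 0) := by
    intro k
    have hk := congrFun h k
    rw [Pi.add_apply, Pi.add_apply, fA_apply, fA_apply, fA_apply, fA_apply,
      ← Nat.cast_add, ← Nat.cast_add] at hk
    refine hcast _ _ ?_ ?_ hk <;> split_ifs <;> omega
  have hsum : ∀ x : Option (Fin m),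
      (∑ k : Fin m, if some k = x then 1 else 0 : ℕ) = if none = x then 0 else 1 := by
    rintro (_ | i) <;> simp
  have hms : ({a, b} : Multiset (Option (Fin m))) = {c, d} := by
    have hsums : (∑ k : Fin m, ((if some k = a then 1 else 0)
        + (if some k = b then 1 else 0) : ℕ))
        = ∑ k : Fin m, ((if some k = c then 1 else 0) + (if some k = d then 1 else 0) : ℕ) :=
      Finset.sum_congr rfl fun k _ => hcnt k
    rw [Finset.sum_add_distrib, Finset.sum_add_distrib, hsum, hsum, hsum, hsum] at hsums
    ext x
    rcases x with _ | k
    · simp only [Multiset.insert_eq_cons, Multiset.count_cons, Multiset.count_singleton]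
      split_ifs at hsums ⊢ <;> omega
    · have := hcnt k
      simp only [Multiset.insert_eq_cons, Multiset.count_cons, Multiset.count_singleton]
      split_ifs at this ⊢ <;> omega
  rw [Sym2.eq_iff]
  rcases Multiset.cons_eq_cons.mp hms with ⟨rfl, h2⟩ | ⟨hne, cs, h1, h2⟩
  · exact Or.inl ⟨rfl, Multiset.singleton_inj.mp h2⟩
  · rw [Multiset.singleton_eq_cons_iff] at h1 h2
    exact Or.inr ⟨h2.1.symm, h1.1⟩

theorem statement2 (r m : ℕ) (hr : 3 ≤ r) (hm : 1 ≤ m)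
    (A : Set (Fin m → ZMod r))
    (hA : A = {0} ∪ Set.range (fun i : Fin m => Pi.single i (1 : ZMod r))) :
    A.ncard = m + 1 ∧
    (A + A).ncard = (m + 1) * (m + 2) / 2 ∧
    affSpan A = Set.univ ∧
    (affSpan A).ncard = r ^ m := by
  haveI : NeZero r := ⟨by omega⟩
  have hAr : A = Set.range (fA m r) := by
    rw [hA]; ext x
    simp only [Set.mem_union, Set.mem_singleton_iff, Set.mem_range]
    constructor
    · rintro (rfl | ⟨i, rfl⟩)
      exacts [⟨none, rfl⟩, ⟨some i, rfl⟩]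
    · rintro ⟨(_ | i), rfl⟩
      · exact Or.inl rfl
      · exact Or.inr ⟨i, rfl⟩
  have hfinj : Function.Injective (fA m r) := by
    intro a b hab
    have := sym_inj hr a a b b (by rw [hab])
    rw [Sym2.eq_iff] at this
    tauto
  have h1 : A.ncard = m + 1 := by
    rw [hAr, ← Nat.card_coe_set_eq, Nat.card_range_of_injective hfinj]
    simp
  set g : Sym2 (Option (Fin m)) → (Fin m → ZMod r) :=
    Sym2.lift ⟨fun a b => fA m r a + fA m r b, fun a b => add_comm _ _⟩ with hg
  have hAA : A + A = Set.range g := by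
    rw [hAr]; ext x
    simp only [Set.mem_add, Set.mem_range]
    constructor
    · rintro ⟨_, ⟨a, rfl⟩, _, ⟨b, rfl⟩, rfl⟩
      exact ⟨s(a, b), rfl⟩
    · rintro ⟨s, rfl⟩
      induction s using Sym2.ind with
      | _ a b => exact ⟨_, ⟨a, rfl⟩, _, ⟨b, rfl⟩, rfl⟩
  have hginj : Function.Injective g := by
    intro s t
    induction s using Sym2.ind with
    | _ a b =>
      induction t using Sym2.ind with
      | _ c d =>
        intro hst
        exact sym_inj hr a b c d (by simpa [hg] using hst)
  have h2 : (A + A).ncard = (m + 1) * (m + 2) / 2 := by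
    rw [hAA, ← Nat.card_coe_set_eq, Nat.card_range_of_injective hginj,
      Nat.card_eq_fintype_card, Sym2.card]
    simp only [Fintype.card_option, Fintype.card_fin, Nat.choose_two_right]
    rw [Nat.add_sub_cancel]; ring_nf
  have hspan : affSpan A = Set.univ := by
    refine Set.eq_univ_of_univ_subset (Set.subset_sInter ?_)
    rintro C ⟨hAC, H, g0, rfl⟩
    have h0 : (0 : Fin m → ZMod r) ∈ g0 +ᵥ (H : Set (Fin m → ZMod r)) :=
      hAC (by rw [hA]; exact Or.inl rfl)
    obtain ⟨h, hh, hgh⟩ := h0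
    have hgH : g0 ∈ H := by
      have hg0 : g0 = -h := by
        have : g0 + h = 0 := hgh
        linear_combination (norm := abel) this
      rw [hg0]; exact H.neg_mem hh
    have hsingle : ∀ i : Fin m, Pi.single i (1 : ZMod r) ∈ H := by
      intro i
      have hi : Pi.single i (1 : ZMod r) ∈ g0 +ᵥ (H : Set (Fin m → ZMod r)) :=
        hAC (by rw [hA]; exact Or.inr ⟨i, rfl⟩)
      obtain ⟨y, hy, hgy⟩ := hi
      rw [← hgy]
      exact H.add_mem hgH hy
    intro x _
    have hxH : x ∈ H := by
      have hx : x = ∑ i : Fin m, Pi.single i (x i) := (Finset.univ_sum_single x).symm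
      rw [hx]
      refine AddSubgroup.sum_mem H fun i _ => ?_
      have hsm : Pi.single i (x i) = ((x i).val • Pi.single i (1 : ZMod r) : Fin m → ZMod r) := by
        funext k
        simp only [Pi.smul_apply, Pi.single_apply, smul_ite, smul_zero, nsmul_eq_mul, mul_one]
        split_ifs
        · rw [ZMod.natCast_val, ZMod.cast_id]
        · rfl
      rw [hsm]
      exact AddSubgroup.nsmul_mem H (hsingle i) _
    exact ⟨x - g0, H.sub_mem hxH hgH, by simp [vadd_eq_add]⟩
  refine ⟨h1, h2, hspan, ?_⟩
  rw [hspan, Set.ncard_univ, Nat.card_fun]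
  simp [Nat.card_zmod]
end

section
/- Let p be a prime, n ≥ 1, and let v ∈ (ZMod p)^n be nonzero. Let i be the largest coordinate with v_i ≠ 0 and assume v_i = 1. Then for all u, w ∈ (ZMod p)^n and all integers c, d with 1 ≤ c, d ≤ p, one has IS(c, L_v^u) + IS(d, L_v^w) = IS(min(c + d − 1, p), L_v^{u+w}). -/
open Pointwise

/-- `u ≺ v` in the lexicographic order: `u i < v i` (as values in `{0,…,p-1}`)
at the largest coordinate `i` where `u` and `v` differ. -/
def lexLt {n p : ℕ} (u v : Fin n → ZMod p) : Prop :=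
  ∃ i : Fin n, (u i).val < (v i).val ∧ ∀ j : Fin n, i < j → u j = v j

/-- The `v`-line through `u`: `L_v^u = {u + k•v : k ∈ ZMod p}`. -/
def line {n p : ℕ} (v u : Fin n → ZMod p) : Set (Fin n → ZMod p) :=
  {x | ∃ k : ZMod p, x = u + k • v}

/-- `IS k L`: the set of the `k` lexicographically smallest elements of `L`. -/
def IS {n p : ℕ} (k : ℕ) (L : Set (Fin n → ZMod p)) : Set (Fin n → ZMod p) :=
  {x | x ∈ L ∧ ({y | y ∈ L ∧ lexLt y x}).ncard < k}

/-- The `v`-compression of `A`: on each `v`-line `L`, replace `A ∩ L` by the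
initial segment of `L` of the same cardinality. -/
def comp {n p : ℕ} (v : Fin n → ZMod p) (A : Set (Fin n → ZMod p)) :
    Set (Fin n → ZMod p) :=
  ⋃ u : Fin n → ZMod p, IS (A ∩ line v u).ncard (line v u)

/-- `E = {0, e₁, …, e_n}`: zero together with the standard basis. -/
def stdE (n p : ℕ) : Set (Fin n → ZMod p) :=
  {0} ∪ Set.range (fun i : Fin n => Pi.single i (1 : ZMod p))

/-- `A` is `𝓔`-compressed: `E ⊆ A` and `A` is `v`-compressed for every nonzero `v`
whose compression keeps `E` inside the set. -/
def ECompressed {n p : ℕ} (A : Set (Fin n → ZMod p)) : Prop :=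
  stdE n p ⊆ A ∧
    ∀ v : Fin n → ZMod p, v ≠ 0 → stdE n p ⊆ comp v A → comp v A = A

section helpers

variable {n p : ℕ}

lemma line_inj {v : Fin n → ZMod p} {i : Fin n} (hvi : v i = 1) (u : Fin n → ZMod p) :
    Function.Injective (fun k : ZMod p => u + k • v) := by
  intro k l h
  have := congrFun h i
  simpa [hvi] using this

lemma lexLt_line {v : Fin n → ZMod p} {i : Fin n}
    (hvi : v i = 1) (hitop : ∀ j : Fin n, i < j → v j = 0)
    (u : Fin n → ZMod p) (k l : ZMod p) :
    lexLt (u + l • v) (u + k • v) ↔ (u i + l).val < (u i + k).val := by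
  constructor
  · rintro ⟨j, hlt, hab⟩
    rcases lt_trichotomy j i with h | h | h
    · have hkl := hab i h
      simp [hvi] at hkl
      simp [hkl] at hlt
    · subst h; simpa [hvi] using hlt
    · have := hitop j h
      simp [this] at hlt
  · intro h
    exact ⟨i, by simpa [hvi] using h, fun j hj => by simp [hitop j hj]⟩

lemma ncard_val_lt [NeZero p] (m : ℕ) (hm : m ≤ p) :
    {a : ZMod p | a.val < m}.ncard = m := by
  have h : {a : ZMod p | a.val < m} = (fun j : ℕ => (j : ZMod p)) '' (Set.Iio m) := by
    ext a
    constructor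
    · intro ha
      exact ⟨a.val, ha, ZMod.natCast_rightInverse a⟩
    · rintro ⟨j, hj, rfl⟩
      simpa [ZMod.val_cast_of_lt (lt_of_lt_of_le hj hm)] using hj
  rw [h, Set.ncard_image_of_injOn, ← Finset.coe_range, Set.ncard_coe_finset,
    Finset.card_range]
  intro a ha b hb hab
  have ha' : a < p := lt_of_lt_of_le ha hm
  have hb' : b < p := lt_of_lt_of_le hb hm
  have := congrArg ZMod.val hab
  rwa [ZMod.val_cast_of_lt ha', ZMod.val_cast_of_lt hb'] at this

lemma ncard_lexLt_line [NeZero p] {v : Fin n → ZMod p} {i : Fin n}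
    (hvi : v i = 1) (hitop : ∀ j : Fin n, i < j → v j = 0)
    (u : Fin n → ZMod p) (k : ZMod p) :
    {y | y ∈ line v u ∧ lexLt y (u + k • v)}.ncard = (u i + k).val := by
  have hset : {y | y ∈ line v u ∧ lexLt y (u + k • v)}
      = (fun l : ZMod p => u + l • v) '' {l : ZMod p | (u i + l).val < (u i + k).val} := by
    ext y
    simp only [Set.mem_setOf_eq, Set.mem_image, line]
    constructor
    · rintro ⟨⟨l, rfl⟩, hlex⟩
      exact ⟨l, (lexLt_line hvi hitop u k l).mp hlex, rfl⟩
    · rintro ⟨l, hl, rfl⟩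
      exact ⟨⟨l, rfl⟩, (lexLt_line hvi hitop u k l).mpr hl⟩
  rw [hset, Set.ncard_image_of_injective _ (line_inj hvi u)]
  have h2 : {l : ZMod p | (u i + l).val < (u i + k).val}
      = (fun a : ZMod p => a - u i) '' {a : ZMod p | a.val < (u i + k).val} := by
    ext l
    constructor
    · intro hl
      exact ⟨u i + l, hl, by ring⟩
    · rintro ⟨a, ha, rfl⟩
      simpa using ha
  rw [h2, Set.ncard_image_of_injective _ sub_left_injective,
    ncard_val_lt _ (le_of_lt (ZMod.val_lt _))]

lemma mem_IS_iff [NeZero p] {v : Fin n → ZMod p} {i : Fin n}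
    (hvi : v i = 1) (hitop : ∀ j : Fin n, i < j → v j = 0)
    (u : Fin n → ZMod p) (c : ℕ) (x : Fin n → ZMod p) :
    x ∈ IS c (line v u) ↔ ∃ t : ZMod p, t.val < c ∧ x = (u - (u i) • v) + t • v := by
  constructor
  · rintro ⟨⟨k, rfl⟩, hcard⟩
    rw [ncard_lexLt_line hvi hitop u k] at hcard
    refine ⟨u i + k, hcard, ?_⟩
    module
  · rintro ⟨t, ht, rfl⟩
    refine ⟨⟨t - u i, by module⟩, ?_⟩
    have : (u - u i • v + t • v) = u + (t - u i) • v := by module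
    rw [this, ncard_lexLt_line hvi hitop u (t - u i)]
    simpa using ht

lemma val_add_lt [NeZero p] {c d : ℕ} (hc1 : 1 ≤ c) (hd1 : 1 ≤ d)
    (s t : ZMod p) (hs : s.val < c) (ht : t.val < d) :
    (s + t).val < min (c + d - 1) p := by
  have h1 : (s + t).val = (s.val + t.val) % p := ZMod.val_add s t
  have h2 : (s + t).val < p := ZMod.val_lt _
  have h3 : (s.val + t.val) % p ≤ s.val + t.val := Nat.mod_le _ _
  omega

lemma zmod_sum_exists [NeZero p] {c d : ℕ} (hc1 : 1 ≤ c) (hcp : c ≤ p)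
    (hd1 : 1 ≤ d) (hdp : d ≤ p) (r : ZMod p) (hr : r.val < min (c + d - 1) p) :
    ∃ s t : ZMod p, s.val < c ∧ t.val < d ∧ s + t = r := by
  rcases lt_or_ge r.val c with h | h
  · refine ⟨r, 0, h, by simp; omega, by simp⟩
  · have h1 : c - 1 < p := by omega
    have hrv : r.val < c + d - 1 := lt_of_lt_of_le hr (min_le_left _ _)
    have h2 : r.val - (c - 1) < d := by omega
    have h2p : r.val - (c - 1) < p := by omega
    refine ⟨((c - 1 : ℕ) : ZMod p), ((r.val - (c - 1) : ℕ) : ZMod p), ?_, ?_, ?_⟩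
    · rw [ZMod.val_cast_of_lt h1]; omega
    · rw [ZMod.val_cast_of_lt h2p]; exact h2
    · rw [← Nat.cast_add]
      have : c - 1 + (r.val - (c - 1)) = r.val := by omega
      rw [this]
      exact ZMod.natCast_rightInverse r

end helpers

theorem statement3 (p n : ℕ) (hp : p.Prime) (hn : 1 ≤ n)
    (v : Fin n → ZMod p) (hv : v ≠ 0) (i : Fin n)
    (hvi : v i = 1) (hitop : ∀ j : Fin n, i < j → v j = 0)
    (u w : Fin n → ZMod p) (c d : ℕ)
    (hc1 : 1 ≤ c) (hcp : c ≤ p) (hd1 : 1 ≤ d) (hdp : d ≤ p) :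
    IS c (line v u) + IS d (line v w) = IS (min (c + d - 1) p) (line v (u + w)) := by
  haveI : NeZero p := ⟨hp.ne_zero⟩
  ext x
  rw [Set.mem_add]
  constructor
  · rintro ⟨a, ha, b, hb, rfl⟩
    obtain ⟨s, hs, rfl⟩ := (mem_IS_iff hvi hitop u c _).mp ha
    obtain ⟨t, ht, rfl⟩ := (mem_IS_iff hvi hitop w d _).mp hb
    rw [mem_IS_iff hvi hitop (u + w) _]
    refine ⟨s + t, val_add_lt hc1 hd1 s t hs ht, ?_⟩
    have hA : (u + w) i = u i + w i := rfl
    rw [hA]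
    module
  · intro hx
    obtain ⟨r, hr, rfl⟩ := (mem_IS_iff hvi hitop (u + w) _ x).mp hx
    obtain ⟨s, t, hs, ht, rfl⟩ := zmod_sum_exists hc1 hcp hd1 hdp r hr
    refine ⟨_, (mem_IS_iff hvi hitop u c _).mpr ⟨s, hs, rfl⟩,
           _, (mem_IS_iff hvi hitop w d _).mpr ⟨t, ht, rfl⟩, ?_⟩
    have hA : (u + w) i = u i + w i := rfl
    rw [hA]
    module
end

section
/- Let p be a prime, n ≥ 1, and let A ⊆ (ZMod p)^n be 𝓔-compressed. Let i ∈ {1, …, n} and let w ∈ A be an element all of whose coordinates with index ≥ i vanish (i.e., w lies in the span of e₁, …, e_{i−1}). Then A is (e_i − w)-compressed, i.e., C_{e_i − w}(A) = A. -/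
open Pointwise

section aux
variable {n p : ℕ}

lemma mem_line_self (v x : Fin n → ZMod p) : x ∈ line v x := ⟨0, by simp⟩

lemma card_val_lt (hp : p.Prime) (t : ℕ) (ht : t ≤ p) :
    {z : ZMod p | z.val < t}.ncard = t := by
  haveI : Fact p.Prime := ⟨hp⟩
  have h : {z : ZMod p | z.val < t} = (Nat.cast : ℕ → ZMod p) '' Set.Iio t := by
    ext z
    simp only [Set.mem_image, Set.mem_Iio, Set.mem_setOf_eq]
    constructor
    · intro h; exact ⟨z.val, h, ZMod.natCast_rightInverse z⟩
    · rintro ⟨m, hm, rfl⟩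
      rwa [ZMod.val_cast_of_lt (lt_of_lt_of_le hm ht)]
  have hinj : Set.InjOn (Nat.cast : ℕ → ZMod p) (Set.Iio t) := by
    intro a ha b hb hab
    rw [Set.mem_Iio] at ha hb
    have h1 := ZMod.val_cast_of_lt (n := p) (lt_of_lt_of_le ha ht)
    have h2 := ZMod.val_cast_of_lt (n := p) (lt_of_lt_of_le hb ht)
    rw [← h1, ← h2, hab]
  rw [h, Set.ncard_image_of_injOn hinj, ← Finset.coe_Iio, Set.ncard_coe_finset,
    Nat.card_Iio]

lemma count_lt (hp : p.Prime) (i : Fin n) (v : Fin n → ZMod p)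
    (hvi : v i = 1) (hvz : ∀ j, i < j → v j = 0) (x : Fin n → ZMod p) :
    {y | y ∈ line v x ∧ lexLt y x}.ncard = (x i).val := by
  haveI : Fact p.Prime := ⟨hp⟩
  have key : {y | y ∈ line v x ∧ lexLt y x}
      = (fun z : ZMod p => x + (z - x i) • v) '' {z : ZMod p | z.val < (x i).val} := by
    ext y
    simp only [Set.mem_setOf_eq, Set.mem_image]
    constructor
    · rintro ⟨⟨k, rfl⟩, m, hlt, hagree⟩
      refine ⟨x i + k, ?_, by funext j; simp⟩
      rcases lt_trichotomy m i with h | h | h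
      · exfalso
        have hi := hagree i h
        simp only [Pi.add_apply, Pi.smul_apply, smul_eq_mul, hvi, mul_one] at hi
        have hk : k = 0 := by
          have := congrArg (fun z => z - x i) hi
          simpa using this
        subst hk
        simp at hlt
      · subst h
        simpa [hvi] using hlt
      · exfalso
        have : (x + k • v) m = x m := by
          simp [hvz m h]
        rw [this] at hlt
        exact lt_irrefl _ hlt
    · rintro ⟨z, hz, rfl⟩
      refine ⟨⟨z - x i, rfl⟩, i, ?_, ?_⟩
      · simpa [hvi] using hz
      · intro j hj
        simp [hvz j hj]
  have hinj : Set.InjOn (fun z : ZMod p => x + (z - x i) • v) {z : ZMod p | z.val < (x i).val} := by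
    intro a _ b _ hab
    have := congrFun hab i
    simpa [hvi] using this
  rw [key, Set.ncard_image_of_injOn hinj, card_val_lt hp _ (le_of_lt (ZMod.val_lt _))]

end aux

theorem statement8 (p n : ℕ) (hp : p.Prime) (hn : 1 ≤ n)
    (A : Set (Fin n → ZMod p)) (hA : ECompressed A)
    (i : Fin n) (w : Fin n → ZMod p) (hw : w ∈ A)
    (hwz : ∀ j : Fin n, i ≤ j → w j = 0) :
    comp (Pi.single i 1 - w) A = A := by
  haveI : Fact p.Prime := ⟨hp⟩
  set v : Fin n → ZMod p := Pi.single i 1 - w with hv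
  have hvi : v i = 1 := by simp [hv, hwz i le_rfl]
  have hvz : ∀ j, i < j → v j = 0 := by
    intro j hj
    simp [hv, hwz j hj.le, Pi.single_eq_of_ne (ne_of_gt hj)]
  have hvne : v ≠ 0 := by
    intro h
    have := congrFun h i
    rw [hvi] at this
    exact one_ne_zero this
  apply hA.2 v hvne
  have hfin : ∀ S : Set (Fin n → ZMod p), S.Finite := fun S => Set.toFinite S
  have hmem : ∀ x : Fin n → ZMod p, (x i).val < (A ∩ line v x).ncard → x ∈ comp v A := by
    intro x hx
    refine Set.mem_iUnion.2 ⟨x, mem_line_self v x, ?_⟩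
    rwa [count_lt hp i v hvi hvz x]
  intro x hx
  rcases hx with hx | ⟨j, rfl⟩
  · -- x = 0
    rw [Set.mem_singleton_iff] at hx
    subst hx
    apply hmem
    simp only [Pi.zero_apply, ZMod.val_zero]
    rw [Set.ncard_pos (hfin _)]
    exact ⟨0, hA.1 (Or.inl rfl), mem_line_self v 0⟩
  · by_cases hji : j = i
    · subst hji
      apply hmem
      beta_reduce
      have h1 : ((Pi.single j 1 : Fin n → ZMod p) j) = 1 := by simp
      rw [h1, ZMod.val_one _, Set.one_lt_ncard (hfin _)]
      have hwl : w ∈ line v (Pi.single j 1 : Fin n → ZMod p) := by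
        refine ⟨-1, ?_⟩
        funext m
        simp [hv]
      refine ⟨w, ⟨hw, hwl⟩, (Pi.single j 1 : Fin n → ZMod p),
        ⟨hA.1 (Or.inr ⟨j, rfl⟩), mem_line_self v _⟩, ?_⟩
      intro h
      have := congrFun h j
      rw [hwz j le_rfl] at this
      simp at this
    · apply hmem
      beta_reduce
      have h0 : ((Pi.single j 1 : Fin n → ZMod p) i) = 0 := by simp [Ne.symm hji]
      
      rw [h0, ZMod.val_zero, Set.ncard_pos (hfin _)]
      exact ⟨Pi.single j 1, hA.1 (Or.inr ⟨j, rfl⟩), mem_line_self v _⟩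
end

section
/- Let p be a prime, n ≥ 1, and let A ⊆ (ZMod p)^n be 𝓔-compressed. Let h be the maximal index such that the subgroup H = span{e₁, …, e_h} is contained in A, assume m := n − h ≥ 1, and set a_i = e_{h+i} for i ∈ {1, …, m}. Let q ∈ {1, …, p−1} be maximal such that A ∩ (q·a₁ + H) is nonempty, let A₁ = A ∩ (q·a₁ + H), and let A_i = A ∩ (a_i + H) for i ∈ {2, …, m}. Then A = H ∪ (a₁ + H) ∪ (2a₁ + H) ∪ … ∪ ((q−1)a₁ + H) ∪ A₁ ∪ A₂ ∪ … ∪ A_m. -/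
open Pointwise

/-- The subgroup spanned by the first `h` standard basis vectors `e_1, ..., e_h`. -/
def spanE (p n h : ℕ) : AddSubgroup (Fin n → ZMod p) :=
  AddSubgroup.closure {x | ∃ j : Fin n, (j : ℕ) < h ∧ x = Pi.single j 1}

namespace S10

variable {n p : ℕ}

lemma line_self (v u : Fin n → ZMod p) : u ∈ line v u := ⟨0, by simp⟩

lemma line_eq_of_mem {v u x : Fin n → ZMod p} (hx : x ∈ line v u) :
    line v x = line v u := by
  obtain ⟨k, rfl⟩ := hx
  ext y
  constructor
  · rintro ⟨l, rfl⟩; exact ⟨k + l, by module⟩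
  · rintro ⟨l, rfl⟩; exact ⟨l - k, by module⟩

lemma comp_inter_line {A : Set (Fin n → ZMod p)} {v : Fin n → ZMod p}
    (hc : comp v A = A) (u : Fin n → ZMod p) :
    A ∩ line v u = IS (A ∩ line v u).ncard (line v u) := by
  apply Set.Subset.antisymm
  · rintro x ⟨hxA, hxL⟩
    have hxc : x ∈ comp v A := hc.symm ▸ hxA
    obtain ⟨S, ⟨u', rfl⟩, hxS⟩ := hxc
    have hxS' : x ∈ IS (A ∩ line v u').ncard (line v u') := hxS
    have hll : line v u' = line v u := by
      rw [← line_eq_of_mem hxS'.1, line_eq_of_mem hxL]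
    rwa [hll] at hxS'
  · intro x hx
    refine ⟨?_, hx.1⟩
    rw [← hc]
    exact Set.mem_iUnion.2 ⟨u, hx⟩

lemma lexLt_line_iff {j : Fin n} {v : Fin n → ZMod p}
    (hvj : v j = 1) (hvt : ∀ l : Fin n, j < l → v l = 0)
    (z : Fin n → ZMod p) (k : ZMod p) :
    lexLt (z + k • v) z ↔ (z j + k).val < (z j).val := by
  constructor
  · rintro ⟨i, hlt, hup⟩
    rcases lt_trichotomy i j with hij | rfl | hij
    · have h1 : z j + k * v j = z j := hup j hij
      rw [hvj, mul_one] at h1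
      have hk : k = 0 := by
        have := add_eq_left.mp h1; exact this
      rw [hk] at hlt
      simp at hlt
    · simpa [hvj] using hlt
    · have : v i = 0 := hvt i hij
      simp [this] at hlt
  · intro hk
    refine ⟨j, by simpa [hvj] using hk, fun l hl => by simp [hvt l hl]⟩

lemma preds_mono {j : Fin n} {v : Fin n → ZMod p}
    (hvj : v j = 1) (hvt : ∀ l : Fin n, j < l → v l = 0)
    (z : Fin n → ZMod p) (t : ZMod p)
    (ht : (z j + t).val ≤ (z j).val) :
    {y | y ∈ line v z ∧ lexLt y (z + t • v)} ⊆ {y | y ∈ line v z ∧ lexLt y z} := by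
  rintro y ⟨⟨k, rfl⟩, hlt⟩
  refine ⟨⟨k, rfl⟩, ?_⟩
  have h1 : z + k • v = (z + t • v) + (k - t) • v := by module
  rw [h1, lexLt_line_iff hvj hvt] at hlt
  have hjz : (z + t • v) j = z j + t := by simp [hvj]
  rw [hjz] at hlt
  have h2 : z j + t + (k - t) = z j + k := by ring
  rw [h2] at hlt
  rw [lexLt_line_iff hvj hvt]
  omega

end S10

namespace S10

variable {n p : ℕ}

lemma preds_eq_empty {j : Fin n} {v : Fin n → ZMod p}
    (hvj : v j = 1) (hvt : ∀ l : Fin n, j < l → v l = 0)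
    (z : Fin n → ZMod p) (hz : (z j).val = 0) :
    {y | y ∈ line v z ∧ lexLt y z} = ∅ := by
  ext y
  simp only [Set.mem_setOf_eq, Set.mem_empty_iff_false, iff_false, not_and]
  rintro ⟨k, rfl⟩ hlt
  rw [lexLt_line_iff hvj hvt] at hlt
  omega

lemma preds_eq_singleton [NeZero p] {j : Fin n} {v : Fin n → ZMod p}
    (hvj : v j = 1) (hvt : ∀ l : Fin n, j < l → v l = 0)
    (z : Fin n → ZMod p) (hz : (z j).val = 1) :
    {y | y ∈ line v z ∧ lexLt y z} = {z - v} := by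
  have hzj : z j = 1 := by
    have := ZMod.natCast_val (z j) |>.trans (ZMod.cast_id p (z j))
    rw [hz] at this; simpa using this.symm
  ext y
  simp only [Set.mem_setOf_eq, Set.mem_singleton_iff]
  constructor
  · rintro ⟨⟨k, rfl⟩, hlt⟩
    rw [lexLt_line_iff hvj hvt] at hlt
    rw [hz] at hlt
    have h0 : (z j + k).val = 0 := by omega
    have h0' : z j + k = 0 := (ZMod.val_eq_zero _).mp h0
    have hk : k = -1 := by
      rw [hzj] at h0'
      linear_combination h0'
    rw [hk]; module
  · rintro rfl
    refine ⟨⟨-1, by module⟩, ?_⟩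
    have he : z - v = z + (-1 : ZMod p) • v := by module
    rw [he, lexLt_line_iff hvj hvt, hz, hzj]
    simp

lemma single_ne_zero' (hp2 : 2 ≤ p) (j : Fin n) : (Pi.single j 1 : Fin n → ZMod p) j ≠ 0 := by
  haveI := Fact.mk (show 1 < p by omega)
  rw [Pi.single_eq_same]
  intro h0
  have := ZMod.val_one p
  rw [h0] at this; simp at this

lemma stdE_subset_comp {A : Set (Fin n → ZMod p)} (hp2 : 2 ≤ p)
    (hEA : stdE n p ⊆ A) {j : Fin n} {u : Fin n → ZMod p}
    (hu : u ∈ A) (huj : ∀ l : Fin n, j ≤ l → u l = 0) :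
    stdE n p ⊆ comp (Pi.single j 1 - u) A := by
  haveI := Fact.mk (show 1 < p by omega)
  set v : Fin n → ZMod p := Pi.single j 1 - u with hv
  have hvj : v j = 1 := by simp [hv, huj j le_rfl]
  have hvt : ∀ l : Fin n, j < l → v l = 0 := by
    intro l hl
    simp [hv, huj l hl.le, Pi.single_eq_of_ne (ne_of_gt hl)]
  intro g hg
  have hgA : g ∈ A := hEA hg
  refine Set.mem_iUnion.2 ⟨g, line_self v g, ?_⟩
  by_cases hgj : g j = 0
  · rw [preds_eq_empty hvj hvt g (by simp [hgj])]
    have : (A ∩ line v g).Nonempty := ⟨g, hgA, line_self v g⟩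
    simpa using (Set.ncard_pos (Set.toFinite _)).mpr this
  · -- g = Pi.single j 1
    have hgej : g = Pi.single j 1 := by
      rcases hg with h0 | ⟨i, rfl⟩
      · simp only [Set.mem_singleton_iff] at h0; rw [h0] at hgj; simp at hgj
      · by_cases hij : i = j
        · rw [hij]
        · exact absurd (Pi.single_eq_of_ne (by simpa using Ne.symm hij) 1) hgj
    have hval : (g j).val = 1 := by
      rw [hgej, Pi.single_eq_same, ZMod.val_one p]
    rw [preds_eq_singleton hvj hvt g hval, Set.ncard_singleton]
    have huL : u ∈ line v g := by
      refine ⟨-1, ?_⟩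
      rw [hgej, hv]
      module
    have hune : g ≠ u := by
      intro he
      rw [← he] at huj
      exact hgj (huj j le_rfl)
    have hsub : ({g, u} : Set (Fin n → ZMod p)) ⊆ A ∩ line v g := by
      intro y hy
      simp only [Set.mem_insert_iff, Set.mem_singleton_iff] at hy
      rcases hy with rfl | rfl
      · exact ⟨hgA, line_self _ _⟩
      · exact ⟨hu, huL⟩
    calc 1 < 2 := one_lt_two
    _ = ({g, u} : Set (Fin n → ZMod p)).ncard := (Set.ncard_pair hune).symm
    _ ≤ (A ∩ line v g).ncard := Set.ncard_le_ncard hsub (Set.toFinite _)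

lemma L1 {A : Set (Fin n → ZMod p)} (hp : p.Prime) (hA : ECompressed A)
    {j : Fin n} {u x : Fin n → ZMod p} (hu : u ∈ A)
    (huj : ∀ l : Fin n, j ≤ l → u l = 0)
    (hx : x ∈ A) (hxt : ∀ l : Fin n, j < l → x l = 0)
    {s : ℕ} (hs : s ≤ (x j).val) :
    x + (s : ZMod p) • (u - Pi.single j 1) ∈ A := by
  haveI := Fact.mk hp
  haveI : NeZero p := ⟨hp.ne_zero⟩
  have hp2 : 2 ≤ p := hp.two_le
  set v : Fin n → ZMod p := Pi.single j 1 - u with hv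
  have hvj : v j = 1 := by simp [hv, huj j le_rfl]
  have hvt : ∀ l : Fin n, j < l → v l = 0 := by
    intro l hl
    simp [hv, huj l hl.le, Pi.single_eq_of_ne (ne_of_gt hl)]
  have hvne : v ≠ 0 := by
    intro h0
    rw [h0] at hvj
    simp only [Pi.zero_apply] at hvj
    exact one_ne_zero hvj.symm
  have hc : comp v A = A := hA.2 v hvne (stdE_subset_comp hp2 hA.1 hu huj)
  have hline := comp_inter_line hc x
  have hxm : x ∈ IS (A ∩ line v x).ncard (line v x) := by
    rw [← hline]; exact ⟨hx, line_self v x⟩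
  set t : ZMod p := -(s : ZMod p) with hts
  have hkey : x + (s : ZMod p) • (u - Pi.single j 1) = x + t • v := by
    rw [hts, hv]; module
  rw [hkey]
  have hγ : (x j).val < p := ZMod.val_lt _
  have hxval : x j + t = (((x j).val - s : ℕ) : ZMod p) := by
    have h1 : ((((x j).val : ℕ)) : ZMod p) = x j :=
      ZMod.natCast_val (x j) |>.trans (ZMod.cast_id p (x j))
    rw [hts, Nat.cast_sub hs, h1]
    ring
  have hvalle : (x j + t).val ≤ (x j).val := by
    rw [hxval, ZMod.val_cast_of_lt (by omega)]
    omega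
  have hym : x + t • v ∈ IS (A ∩ line v x).ncard (line v x) := by
    refine ⟨⟨t, rfl⟩, ?_⟩
    exact lt_of_le_of_lt
      (Set.ncard_le_ncard (preds_mono hvj hvt x t hvalle) (Set.toFinite _)) hxm.2
  rw [← hline] at hym
  exact hym.1

end S10

namespace S10

variable {n p : ℕ}

def lowSub (p n h : ℕ) : AddSubgroup (Fin n → ZMod p) where
  carrier := {x | ∀ k : Fin n, h ≤ (k : ℕ) → x k = 0}
  zero_mem' := by intro k hk; rfl
  add_mem' := by
    intro a b ha hb k hk
    simp only [Set.mem_setOf_eq] at ha hb ⊢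
    simp [ha k hk, hb k hk]
  neg_mem' := by
    intro a ha k hk
    simp only [Set.mem_setOf_eq] at ha ⊢
    simp [ha k hk]

lemma spanE_coe (p n h : ℕ) [NeZero p] :
    (spanE p n h : Set (Fin n → ZMod p)) = {x | ∀ k : Fin n, h ≤ (k : ℕ) → x k = 0} := by
  have hSeq : ((lowSub p n h : AddSubgroup (Fin n → ZMod p)) : Set (Fin n → ZMod p))
      = {x | ∀ k : Fin n, h ≤ (k : ℕ) → x k = 0} := rfl
  set S := lowSub p n h with hSdef
  apply Set.Subset.antisymm
  · have h1 : spanE p n h ≤ S := by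
      rw [spanE, AddSubgroup.closure_le]
      rintro x ⟨j, hj, rfl⟩
      rw [hSeq]
      intro k hk
      exact Pi.single_eq_of_ne (by intro he; rw [he] at hk; omega) 1
    intro x hx
    rw [← hSeq]
    exact h1 hx
  · intro x hx
    rw [Set.mem_setOf_eq] at hx
    have hxe : x = ∑ k : Fin n, Pi.single k (x k) := (Finset.univ_sum_single x).symm
    rw [SetLike.mem_coe, hxe]
    apply AddSubgroup.sum_mem
    intro k _
    by_cases hk : (k : ℕ) < h
    · have hx1 : Pi.single k (x k) = ((x k).val • (Pi.single k (1 : ZMod p) : Fin n → ZMod p) : Fin n → ZMod p) := by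
        ext l
        by_cases hl : l = k
        · subst hl
          simp only [Pi.single_eq_same, Pi.smul_apply, smul_eq_mul, nsmul_eq_mul, mul_one]
          exact (ZMod.natCast_val (x l) |>.trans (ZMod.cast_id p (x l))).symm
        · simp [Pi.single_eq_of_ne hl]
      rw [hx1]
      have hgen : (Pi.single k (1:ZMod p) : Fin n → ZMod p)
          ∈ AddSubgroup.closure
            {x : Fin n → ZMod p | ∃ j : Fin n, (j : ℕ) < h ∧ x = Pi.single j 1} :=
        AddSubgroup.subset_closure ⟨k, hk, rfl⟩
      exact AddSubgroup.nsmul_mem (spanE p n h) hgen _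
    · have : x k = 0 := hx k (by omega)
      rw [this, Pi.single_zero]
      exact AddSubgroup.zero_mem _

end S10

theorem statement10 (p n : ℕ) (hp : p.Prime) (hn : 1 ≤ n)
    (A : Set (Fin n → ZMod p)) (hA : ECompressed A)
    (h : ℕ) (hhA : (spanE p n h : Set (Fin n → ZMod p)) ⊆ A)
    (hhmax : ∀ k : ℕ, (spanE p n k : Set (Fin n → ZMod p)) ⊆ A → k ≤ h)
    (m : ℕ) (hm : m = n - h) (hm1 : 1 ≤ m)
    (a : Fin m → (Fin n → ZMod p))
    (ha : ∀ i : Fin m,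
      a i = Pi.single (⟨h + (i : ℕ), by have := i.isLt; omega⟩ : Fin n) 1)
    (q : ℕ) (hq1 : 1 ≤ q) (hq2 : q ≤ p - 1)
    (hqne : (A ∩ (q • a ⟨0, hm1⟩ +ᵥ (spanE p n h : Set (Fin n → ZMod p)))).Nonempty)
    (hqmax : ∀ q' : ℕ, q' ≤ p - 1 →
      (A ∩ (q' • a ⟨0, hm1⟩ +ᵥ (spanE p n h : Set (Fin n → ZMod p)))).Nonempty →
      q' ≤ q) :
    A = (⋃ i ∈ Set.Iio q, (i • a ⟨0, hm1⟩ +ᵥ (spanE p n h : Set (Fin n → ZMod p))))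
      ∪ (A ∩ (q • a ⟨0, hm1⟩ +ᵥ (spanE p n h : Set (Fin n → ZMod p))))
      ∪ (⋃ i : Fin m, ⋃ (_ : (i : ℕ) ≠ 0),
          A ∩ (a i +ᵥ (spanE p n h : Set (Fin n → ZMod p)))) := by
  haveI hfact : Fact p.Prime := ⟨hp⟩
  haveI : NeZero p := ⟨hp.ne_zero⟩
  haveI := Fact.mk hp.one_lt
  have hp2 : 2 ≤ p := hp.two_le
  have hEA := hA.1
  have h0A : (0 : Fin n → ZMod p) ∈ A := hEA (Or.inl rfl)
  have hhn : h < n := by omega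
  have hq : q < p := by omega
  have hcastval : ∀ c : ZMod p, ((c.val : ℕ) : ZMod p) = c :=
    fun c => (ZMod.natCast_val c).trans (ZMod.cast_id p c)
  have hval1 : (1 : ZMod p).val = 1 := ZMod.val_one p
  set j0 : Fin n := ⟨h, hhn⟩ with hj0def
  set a0 : Fin n → ZMod p := a ⟨0, hm1⟩ with ha0def
  have ha0 : a0 = Pi.single j0 1 := by
    rw [ha0def, ha ⟨0, hm1⟩]
    congr 1
  have hHmem : ∀ x : Fin n → ZMod p,
      x ∈ (spanE p n h : Set (Fin n → ZMod p)) ↔ ∀ l : Fin n, h ≤ (l : ℕ) → x l = 0 := by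
    intro x; rw [S10.spanE_coe]; exact Iff.rfl
  have hHA : ∀ t : Fin n → ZMod p, (∀ l : Fin n, h ≤ (l : ℕ) → t l = 0) → t ∈ A :=
    fun t ht => hhA ((hHmem t).2 ht)
  have hsingle : ∀ (j' : Fin n) (c : ZMod p),
      c • (Pi.single j' (1 : ZMod p) : Fin n → ZMod p) = Pi.single j' c := by
    intro j' c; ext l
    by_cases hl : l = j'
    · subst hl; simp
    · simp [Pi.single_eq_of_ne hl]
  have hsm : ∀ k : ℕ, (k • a0 : Fin n → ZMod p) = Pi.single j0 ((k : ZMod p)) := by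
    intro k
    rw [ha0]
    ext l
    by_cases hl : l = j0
    · subst hl; simp
    · simp [Pi.single_eq_of_ne hl]
  have hvadd : ∀ g x : Fin n → ZMod p,
      x ∈ g +ᵥ (spanE p n h : Set (Fin n → ZMod p)) ↔
        ∀ l : Fin n, h ≤ (l : ℕ) → x l = g l := by
    intro g x
    rw [Set.mem_vadd_set_iff_neg_vadd_mem, vadd_eq_add, hHmem]
    constructor
    · intro hmm l hl
      have := hmm l hl
      simpa [neg_add_eq_zero, eq_comm] using (this : (-g + x) l = 0)
    · intro hmm l hl
      show (-g + x) l = 0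
      simp [hmm l hl]
  have hcos : ∀ (k : ℕ) (x : Fin n → ZMod p),
      x ∈ k • a0 +ᵥ (spanE p n h : Set (Fin n → ZMod p)) ↔
        (x j0 = (k : ZMod p) ∧ ∀ l : Fin n, h < (l : ℕ) → x l = 0) := by
    intro k x
    rw [hvadd, hsm]
    constructor
    · intro hmm
      refine ⟨by simpa using hmm j0 le_rfl, fun l hl => ?_⟩
      have hlj : l ≠ j0 := by
        intro he; rw [he] at hl; simp [hj0def] at hl
      rw [hmm l hl.le, Pi.single_eq_of_ne hlj]
    · rintro ⟨h1, h2⟩ l hl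
      by_cases hlj : l = j0
      · subst hlj; simpa using h1
      · have hlh : h < (l : ℕ) := by
          rcases lt_or_eq_of_le hl with hlt | heq
          · exact hlt
          · exact absurd (Fin.ext heq.symm : l = j0) hlj
        rw [h2 l hlh, Pi.single_eq_of_ne hlj]
  obtain ⟨w, hwA, hw⟩ := hqne
  obtain ⟨hw1, hw2⟩ := (hcos q w).1 hw
  have hwj0 : (w j0).val = q := by rw [hw1, ZMod.val_cast_of_lt hq]
  -- full cosets below q
  have A1 : ∀ (k : ℕ) (t : Fin n → ZMod p), k < q → (∀ l : Fin n, h ≤ (l : ℕ) → t l = 0) →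
      Pi.single j0 ((k : ZMod p)) + t ∈ A := by
    intro k t hk ht
    set s : ℕ := q - k with hsdef
    have hs1 : 1 ≤ s := by omega
    have hsp : s < p := by omega
    have hsne : ((s : ℕ) : ZMod p) ≠ 0 := by
      intro h0
      rw [ZMod.natCast_eq_zero_iff] at h0
      have := Nat.le_of_dvd (by omega) h0
      omega
    set u : Fin n → ZMod p :=
      (((s : ℕ) : ZMod p))⁻¹ • (t - (w - (Pi.single j0 ((q : ZMod p)) : Fin n → ZMod p))) with hudef
    have hu0 : ∀ l : Fin n, h ≤ (l : ℕ) → u l = 0 := by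
      intro l hl
      by_cases hlj : l = j0
      · subst hlj
        rw [hudef]
        simp [ht _ hl, hw1]
      · have hlh : h < (l : ℕ) := by
          rcases lt_or_eq_of_le hl with hlt | heq
          · exact hlt
          · exact absurd (Fin.ext heq.symm : l = j0) hlj
        rw [hudef]
        simp [ht _ hl, hw2 l hlh, Pi.single_eq_of_ne hlj]
    have huj : ∀ l : Fin n, j0 ≤ l → u l = 0 := fun l hl => hu0 l (by
      have := Fin.le_def.mp hl; exact this)
    have huA : u ∈ A := hHA u hu0
    have hwt : ∀ l : Fin n, j0 < l → w l = 0 := fun l hl => hw2 l (by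
      have := Fin.lt_def.mp hl; exact this)
    have hL1 := S10.L1 hp hA huA huj hwA hwt (show s ≤ (w j0).val by omega)
    have hsu : ((s : ℕ) : ZMod p) • u = t - (w - (Pi.single j0 ((q : ZMod p)) : Fin n → ZMod p)) := by
      rw [hudef, smul_smul, mul_inv_cancel₀ hsne, one_smul]
    have hqk : (Pi.single j0 ((q : ZMod p)) : Fin n → ZMod p)
        = Pi.single j0 ((k : ZMod p)) + ((s : ℕ) : ZMod p) • (Pi.single j0 (1 : ZMod p) : Fin n → ZMod p) := by
      rw [hsingle, ← Pi.single_add, ← Nat.cast_add, show k + s = q by omega]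
    have heq : w + ((s : ℕ) : ZMod p) • (u - Pi.single j0 1)
        = Pi.single j0 ((k : ZMod p)) + t := by
      rw [smul_sub, hsu, hqk]
      abel
    rwa [heq] at hL1
  -- q-bound from hqmax
  have hfull : ∀ z ∈ A, (∀ l : Fin n, h < (l : ℕ) → z l = 0) → (z j0).val ≤ q := by
    intro z hzA hz
    refine hqmax (z j0).val (by have := ZMod.val_lt (z j0); omega) ⟨z, hzA, ?_⟩
    rw [hcos]
    exact ⟨(hcastval _).symm, hz⟩
  -- L2: no element of the form e_j + c*a0 + r (j above h, c ≠ 0, r ∈ H) lies in A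
  have L2 : ∀ j : Fin n, h < (j : ℕ) → ∀ (c : ZMod p) (r : Fin n → ZMod p),
      c ≠ 0 → (∀ l : Fin n, h ≤ (l : ℕ) → r l = 0) →
      (Pi.single j 1 : Fin n → ZMod p) + Pi.single j0 c + r ∈ A → False := by
    intro j hj c r hc hr hx3A
    have hjj0 : j ≠ j0 := by
      intro he; rw [he] at hj; simp [hj0def] at hj
    set γ' := c.val with hgdef
    have hγ'1 : 1 ≤ γ' := by
      have := (ZMod.val_eq_zero c).not.2 hc; omega
    have hγ'p : γ' < p := ZMod.val_lt c
    have hcγ : ((γ' : ℕ) : ZMod p) = c := hcastval c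
    set X : Fin n → ZMod p := Pi.single j 1 + Pi.single j0 c + r with hXdef
    have hXj : X j = 1 := by
      rw [hXdef]
      simp [Pi.single_eq_same, Pi.single_eq_of_ne hjj0, hr j hj.le]
    have hXt : ∀ l : Fin n, j < l → X l = 0 := by
      intro l hl
      have hlj : l ≠ j := (ne_of_gt hl)
      have hlh : h < (l : ℕ) := by
        rw [Fin.lt_def] at hl; omega
      have hlj0 : l ≠ j0 := by
        intro he; rw [he] at hlh; simp [hj0def] at hlh
      rw [hXdef]
      simp [Pi.single_eq_of_ne hlj, Pi.single_eq_of_ne hlj0, hr l hlh.le]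
    have step : ∀ u : Fin n → ZMod p, u ∈ A → (∀ l : Fin n, j ≤ l → u l = 0) →
        Pi.single j0 c + r + u ∈ A := by
      intro u huA huj
      have hs1 : 1 ≤ (X j).val := by rw [hXj, hval1]
      have hL1 := S10.L1 hp hA huA huj hx3A hXt hs1
      have heq : X + ((1 : ℕ) : ZMod p) • (u - Pi.single j 1)
          = Pi.single j0 c + r + u := by
        rw [hXdef, Nat.cast_one, one_smul]
        abel
      rwa [heq] at hL1
    have hwt' : ∀ l : Fin n, j ≤ l → w l = 0 := by
      intro l hl
      rw [Fin.le_def] at hl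
      exact hw2 l (by omega)
    by_cases hqp : q + 1 ≤ p - 1
    · by_cases hγq : γ' ≤ q
      · -- produce an element of the empty coset q+1
        have hz : ∃ z ∈ A, z j0 = ((q + 1 : ℕ) : ZMod p) ∧ ∀ l : Fin n, h < (l : ℕ) → z l = 0 := by
          by_cases hγ1 : γ' = 1
          · refine ⟨Pi.single j0 c + r + w, step w hwA hwt', ?_, ?_⟩
            · have he1 : ((Pi.single j0 c : Fin n → ZMod p) + r + w) j0 = c + (q : ZMod p) := by
                simp [Pi.single_eq_same, hr j0 le_rfl, hw1]
              rw [he1, ← hcγ, hγ1]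
              push_cast
              ring
            · intro l hl
              have hlj0 : l ≠ j0 := by
                intro he; rw [he] at hl; simp [hj0def] at hl
              simp [Pi.single_eq_of_ne hlj0, hr l hl.le, hw2 l hl]
          · set u : Fin n → ZMod p := Pi.single j0 (((q + 1 - γ' : ℕ) : ZMod p)) with hudef
            have huA : u ∈ A := by
              have := A1 (q + 1 - γ') 0 (by omega) (fun l _ => rfl)
              simpa using this
            have hut : ∀ l : Fin n, j ≤ l → u l = 0 := by
              intro l hl
              have : l ≠ j0 := by
                rw [Fin.le_def] at hl
                intro he; rw [he] at hl; simp [hj0def] at hl; omega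
              rw [hudef, Pi.single_eq_of_ne this]
            refine ⟨Pi.single j0 c + r + u, step u huA hut, ?_, ?_⟩
            · have he1 : ((Pi.single j0 c : Fin n → ZMod p) + r + u) j0
                  = c + ((q + 1 - γ' : ℕ) : ZMod p) := by
                rw [hudef]
                simp [Pi.single_eq_same, hr j0 le_rfl]
              rw [he1, ← hcγ, ← Nat.cast_add, show γ' + (q + 1 - γ') = q + 1 by omega]
            · intro l hl
              have hlj0 : l ≠ j0 := by
                intro he; rw [he] at hl; simp [hj0def] at hl
              rw [hudef]
              simp [Pi.single_eq_of_ne hlj0, hr l hl.le]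
        obtain ⟨z, hzA, hzj0, hzt⟩ := hz
        have := hfull z hzA hzt
        rw [hzj0, ZMod.val_cast_of_lt (by omega)] at this
        omega
      · -- γ' > q : the coset γ' itself must be empty
        have hnegr : (-r : Fin n → ZMod p) ∈ A :=
          hHA _ (fun l hl => by simp [hr l hl])
        have hnegt : ∀ l : Fin n, j ≤ l → (-r : Fin n → ZMod p) l = 0 := by
          intro l hl
          rw [Fin.le_def] at hl
          simp [hr l (by omega : h ≤ (l : ℕ))]
        have hzA := step (-r) hnegr hnegt
        have hzeq : Pi.single j0 c + r + -r = (Pi.single j0 c : Fin n → ZMod p) := by abel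
        rw [hzeq] at hzA
        have hzt : ∀ l : Fin n, h < (l : ℕ) → (Pi.single j0 c : Fin n → ZMod p) l = 0 := by
          intro l hl
          have hlj0 : l ≠ j0 := by
            intro he; rw [he] at hl; simp [hj0def] at hl
          simp [Pi.single_eq_of_ne hlj0]
        have := hfull _ hzA hzt
        rw [Pi.single_eq_same] at this
        omega
    · -- q = p - 1
      have hqe : q = p - 1 := by omega
      -- find a missing element in the q-coset
      have hmiss : ∃ t0 : Fin n → ZMod p, (∀ l : Fin n, h ≤ (l : ℕ) → t0 l = 0) ∧
          (Pi.single j0 ((q : ZMod p)) : Fin n → ZMod p) + t0 ∉ A := by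
        by_contra hall
        push_neg at hall
        have hsub : (spanE p n (h + 1) : Set (Fin n → ZMod p)) ⊆ A := by
          intro z hz
          rw [S10.spanE_coe] at hz
          have hz' : ∀ l : Fin n, h + 1 ≤ (l : ℕ) → z l = 0 := hz
          set t : Fin n → ZMod p := z - Pi.single j0 (z j0) with htdef
          have ht : ∀ l : Fin n, h ≤ (l : ℕ) → t l = 0 := by
            intro l hl
            by_cases hlj : l = j0
            · subst hlj; rw [htdef]; simp
            · have : h + 1 ≤ (l : ℕ) := by
                rcases lt_or_eq_of_le hl with hlt | heq
                · omega
                · exact absurd (Fin.ext heq.symm : l = j0) hlj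
              rw [htdef]
              simp [hz' l this, Pi.single_eq_of_ne hlj]
          have hzeq : z = Pi.single j0 ((((z j0).val : ℕ)) : ZMod p) + t := by
            rw [htdef, hcastval]
            abel
          have hδ : (z j0).val ≤ q := by
            have := ZMod.val_lt (z j0); omega
          rcases lt_or_eq_of_le hδ with hlt | heq
          · rw [hzeq]; exact A1 _ t hlt ht
          · rw [hzeq, heq]; exact hall t ht
        have := hhmax (h + 1) hsub
        omega
      obtain ⟨t0, ht0, hmiss⟩ := hmiss
      set u : Fin n → ZMod p := Pi.single j0 (((q - γ' : ℕ) : ZMod p)) + (t0 - r) with hudef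
      have huA : u ∈ A := by
        rw [hudef]
        exact A1 (q - γ') (t0 - r) (by omega) (fun l hl => by simp [ht0 _ hl, hr _ hl])
      have hut : ∀ l : Fin n, j ≤ l → u l = 0 := by
        intro l hl
        rw [Fin.le_def] at hl
        have hlh : h ≤ (l : ℕ) := by omega
        have hlj0 : l ≠ j0 := by
          intro he; rw [he] at hl; simp [hj0def] at hl; omega
        rw [hudef]
        simp [Pi.single_eq_of_ne hlj0, ht0 _ hlh, hr _ hlh]
      have hzA := step u huA hut
      have hqsum : (Pi.single j0 (((γ' : ℕ) : ZMod p)) : Fin n → ZMod p)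
          + Pi.single j0 (((q - γ' : ℕ) : ZMod p))
          = Pi.single j0 ((q : ZMod p)) := by
        rw [← Pi.single_add, ← Nat.cast_add, show γ' + (q - γ') = q by omega]
      have hzeq : Pi.single j0 c + r + u
          = (Pi.single j0 ((q : ZMod p)) : Fin n → ZMod p) + t0 := by
        rw [hudef, ← hcγ, ← hqsum]
        abel
      rw [hzeq] at hzA
      exact hmiss hzA
  -- destructor for membership in the RHS union
  have hRHStail : ∀ z : Fin n → ZMod p,
      z ∈ (⋃ i ∈ Set.Iio q, (i • a0 +ᵥ (spanE p n h : Set (Fin n → ZMod p))))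
        ∪ (A ∩ (q • a0 +ᵥ (spanE p n h : Set (Fin n → ZMod p))))
        ∪ (⋃ i : Fin m, ⋃ (_ : (i : ℕ) ≠ 0),
            A ∩ (a i +ᵥ (spanE p n h : Set (Fin n → ZMod p)))) →
      (∃ k : ℕ, k ≤ q ∧ z j0 = (k : ZMod p) ∧ ∀ l : Fin n, h < (l : ℕ) → z l = 0)
      ∨ (∃ i : Fin m, (i : ℕ) ≠ 0 ∧
          z (⟨h + (i : ℕ), by have := i.isLt; omega⟩ : Fin n) = 1 ∧
          ∀ l : Fin n, h ≤ (l : ℕ) → (l : ℕ) ≠ h + (i : ℕ) → z l = 0) := by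
    intro z hz
    rcases hz with (hz | hz) | hz
    · obtain ⟨k, hk, hzk⟩ := Set.mem_iUnion₂.1 hz
      obtain ⟨h1, h2⟩ := (hcos k z).1 hzk
      exact Or.inl ⟨k, le_of_lt hk, h1, h2⟩
    · obtain ⟨h1, h2⟩ := (hcos q z).1 hz.2
      exact Or.inl ⟨q, le_rfl, h1, h2⟩
    · obtain ⟨i, hz2⟩ := Set.mem_iUnion.1 hz
      obtain ⟨hi0, hzAm⟩ := Set.mem_iUnion.1 hz2
      have hzv := (hvadd (a i) z).1 hzAm.2
      rw [ha i] at hzv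
      refine Or.inr ⟨i, hi0, ?_, ?_⟩
      · have := hzv ⟨h + (i : ℕ), by have := i.isLt; omega⟩ (by simp)
        rwa [Pi.single_eq_same] at this
      · intro l hl hlne
        rw [hzv l hl, Pi.single_eq_of_ne (by
          intro he; rw [he] at hlne; simp at hlne)]
  -- main structural induction on the top tail coordinate
  have key : ∀ J : ℕ, ∀ x, x ∈ A → (∀ l : Fin n, h ≤ (l : ℕ) → J < (l : ℕ) → x l = 0) →
      x ∈ (⋃ i ∈ Set.Iio q, (i • a0 +ᵥ (spanE p n h : Set (Fin n → ZMod p))))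
        ∪ (A ∩ (q • a0 +ᵥ (spanE p n h : Set (Fin n → ZMod p))))
        ∪ (⋃ i : Fin m, ⋃ (_ : (i : ℕ) ≠ 0),
            A ∩ (a i +ᵥ (spanE p n h : Set (Fin n → ZMod p)))) := by
    intro J
    induction J using Nat.strong_induction_on with
    | _ J IH =>
      intro x hxA hxJ
      by_cases htail : ∀ l : Fin n, h < (l : ℕ) → x l = 0
      · have hδ := hfull x hxA htail
        rcases lt_or_eq_of_le hδ with hlt | heq
        · refine Set.mem_union_left _ (Set.mem_union_left _ ?_)
          refine Set.mem_biUnion (Set.mem_Iio.2 hlt) ?_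
          exact (hcos _ x).2 ⟨(hcastval _).symm, htail⟩
        · refine Set.mem_union_left _ (Set.mem_union_right _ ?_)
          exact ⟨hxA, (hcos q x).2 ⟨by rw [← heq, hcastval], htail⟩⟩
      · push_neg at htail
        obtain ⟨l₀, hl₀h, hl₀⟩ := htail
        have hTne : (Finset.univ.filter (fun l : Fin n => h < (l : ℕ) ∧ x l ≠ 0)).Nonempty :=
          ⟨l₀, by simp [hl₀h, hl₀]⟩
        set j := (Finset.univ.filter (fun l : Fin n => h < (l : ℕ) ∧ x l ≠ 0)).max' hTne
          with hjdef
        have hjmem := Finset.max'_mem _ hTne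
        rw [← hjdef] at hjmem
        simp only [Finset.mem_filter] at hjmem
        have hjh : h < (j : ℕ) := hjmem.2.1
        have hjx : x j ≠ 0 := hjmem.2.2
        have hjtop : ∀ l : Fin n, j < l → x l = 0 := by
          intro l hl
          by_contra hne
          have hlh : h < (l : ℕ) := by
            rw [Fin.lt_def] at hl; omega
          have hle : l ≤ j := Finset.le_max' _ l (by simp [hlh, hne])
          exact absurd hl (not_lt.2 hle)
        have hjJ : (j : ℕ) ≤ J := by
          by_contra hgt
          exact hjx (hxJ j (le_of_lt hjh) (by omega))
        have hjj0 : j ≠ j0 := by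
          intro he; rw [he] at hjh; simp [hj0def] at hjh
        have hwtj : ∀ l : Fin n, j ≤ l → w l = 0 := by
          intro l hl
          rw [Fin.le_def] at hl
          exact hw2 l (by omega)
        set γ := (x j).val with hγdef
        have hγ1 : 1 ≤ γ := by
          have := (ZMod.val_eq_zero (x j)).not.2 hjx; omega
        have hγp : γ < p := ZMod.val_lt _
        have hxjγ : ((γ : ℕ) : ZMod p) = x j := hcastval (x j)
        set r : Fin n → ZMod p := x - Pi.single j (((γ : ℕ) : ZMod p)) with hrdef
        have hrA : r ∈ A := by
          have hL := S10.L1 hp hA h0A (fun l _ => rfl) hxA hjtop (le_refl γ)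
          have heqr : x + ((γ : ℕ) : ZMod p) • ((0 : Fin n → ZMod p) - Pi.single j 1)
              = r := by
            rw [hrdef, ← hsingle j (((γ : ℕ) : ZMod p))]
            module
          rwa [heqr] at hL
        have hrj : r j = 0 := by
          rw [hrdef]
          simp [Pi.single_eq_same, hxjγ]
        have hrl : ∀ l : Fin n, l ≠ j → r l = x l := by
          intro l hl
          rw [hrdef]
          simp [Pi.single_eq_of_ne hl]
        have hrt : ∀ l : Fin n, j ≤ l → r l = 0 := by
          intro l hl
          rcases eq_or_lt_of_le hl with heq | hlt
          · rw [← heq]; exact hrj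
          · rw [hrl l (ne_of_gt hlt)]; exact hjtop l hlt
        -- x1 = r + e_j ∈ A
        have hc1 : ((γ - 1 : ℕ) : ZMod p) + 1 = ((γ : ℕ) : ZMod p) := by
          push_cast [Nat.cast_sub hγ1]
          ring
        have hx1A : r + Pi.single j 1 ∈ A := by
          have hL := S10.L1 hp hA h0A (fun l _ => rfl) hxA hjtop
            (show γ - 1 ≤ (x j).val by omega)
          have heq1 : x + ((γ - 1 : ℕ) : ZMod p) • ((0 : Fin n → ZMod p) - Pi.single j 1)
              = r + Pi.single j 1 := by
            rw [hrdef, ← hsingle j (((γ : ℕ) : ZMod p)), ← hc1]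
            module
          rwa [heq1] at hL
        have hx1j : ((r + Pi.single j 1 : Fin n → ZMod p) j).val = 1 := by
          simp [hrj, hval1]
        have hx1t : ∀ l : Fin n, j < l → (r + Pi.single j 1 : Fin n → ZMod p) l = 0 := by
          intro l hl
          simp [hrt l (le_of_lt hl), Pi.single_eq_of_ne (ne_of_gt hl)]
        -- r + w ∈ A
        have hrwA : r + w ∈ A := by
          have hL := S10.L1 hp hA hwA hwtj hx1A hx1t (s := 1) (by rw [hx1j])
          have heq2 : (r + Pi.single j 1) + ((1 : ℕ) : ZMod p) • (w - Pi.single j 1)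
              = r + w := by
            rw [Nat.cast_one, one_smul]
            abel
          rwa [heq2] at hL
        -- use IH on r
        have hrRHS := IH ((j : ℕ) - 1) (by omega) r hrA (by
          intro l hl hl2
          exact hrt l (by rw [Fin.le_def]; omega))
        rcases hRHStail r hrRHS with ⟨k, hkq, hrj0, hrtail⟩ | ⟨i, hi0, hrione, hrother⟩
        · by_cases hk0 : ((k : ℕ) : ZMod p) = 0
          · -- r ∈ H
            have hrH : ∀ l : Fin n, h ≤ (l : ℕ) → r l = 0 := by
              intro l hl
              rcases lt_or_eq_of_le hl with hlt | heq
              · exact hrtail l hlt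
              · rw [(Fin.ext heq.symm : l = j0), hrj0, hk0]
            rcases eq_or_lt_of_le hγ1 with hγe | hγ2
            · -- γ = 1 : x lands in the U3 part
              have hxr : x = r + Pi.single j 1 := by
                have : ((γ : ℕ) : ZMod p) = 1 := by rw [← hγe, Nat.cast_one]
                rw [hrdef, ← this]
                abel
              have him : (j : ℕ) - h < m := by
                have := j.isLt; omega
              set i : Fin m := ⟨(j : ℕ) - h, him⟩ with hidef
              have hi0 : (i : ℕ) ≠ 0 := by
                rw [hidef]; simp; omega
              have hje : (⟨h + (i : ℕ), by have := i.isLt; omega⟩ : Fin n) = j := by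
                refine Fin.ext ?_
                simp [hidef]
                omega
              have haieq : a i = Pi.single j 1 := by
                rw [ha i]
                exact congrArg (fun t : Fin n => (Pi.single t 1 : Fin n → ZMod p)) hje
              refine Set.mem_union_right _ ?_
              refine Set.mem_iUnion.2 ⟨i, Set.mem_iUnion.2 ⟨hi0, hxA, ?_⟩⟩
              rw [hvadd, haieq]
              intro l hl
              by_cases hlj : l = j
              · subst hlj
                rw [hxr]
                simp [hrj]
              · rw [hxr]
                simp [Pi.single_eq_of_ne hlj, hrH l hl]
            · -- γ ≥ 2 : contradiction via L2
              exfalso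
              have hc2 : ((γ - 2 : ℕ) : ZMod p) + 1 + 1 = ((γ : ℕ) : ZMod p) := by
                push_cast [Nat.cast_sub (show 2 ≤ γ by omega)]
                ring
              have hx2A : r + Pi.single j 1 + Pi.single j 1 ∈ A := by
                have hL := S10.L1 hp hA h0A (fun l _ => rfl) hxA hjtop
                  (show γ - 2 ≤ (x j).val by omega)
                have heq3 : x + ((γ - 2 : ℕ) : ZMod p) • ((0 : Fin n → ZMod p) - Pi.single j 1)
                    = r + Pi.single j 1 + Pi.single j 1 := by
                  rw [hrdef, ← hsingle j (((γ : ℕ) : ZMod p)), ← hc2]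
                  module
                rwa [heq3] at hL
              have hx2j : ((r + Pi.single j 1 + Pi.single j 1 : Fin n → ZMod p) j).val = 2 := by
                have h2c : (0 : ZMod p) + 1 + 1 = ((2 : ℕ) : ZMod p) := by push_cast; ring
                simp only [Pi.add_apply, Pi.single_eq_same, hrj]
                rw [h2c, ZMod.val_cast_of_lt (by omega)]
              have hx2t : ∀ l : Fin n, j < l →
                  (r + Pi.single j 1 + Pi.single j 1 : Fin n → ZMod p) l = 0 := by
                intro l hl
                simp [hrt l (le_of_lt hl), Pi.single_eq_of_ne (ne_of_gt hl)]
              have hz2A : r + Pi.single j 1 + w ∈ A := by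
                have hL := S10.L1 hp hA hwA hwtj hx2A hx2t (s := 1) (by rw [hx2j]; omega)
                have heq4 : (r + Pi.single j 1 + Pi.single j 1)
                    + ((1 : ℕ) : ZMod p) • (w - Pi.single j 1)
                    = r + Pi.single j 1 + w := by
                  rw [Nat.cast_one, one_smul]
                  abel
                rwa [heq4] at hL
              have hqvne : ((q : ℕ) : ZMod p) ≠ 0 := by
                intro h0
                have : (((q : ℕ) : ZMod p)).val = q := ZMod.val_cast_of_lt hq
                rw [h0, ZMod.val_zero] at this
                omega
              refine L2 j hjh ((q : ℕ) : ZMod p)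
                (r + (w - Pi.single j0 (((q : ℕ) : ZMod p)))) hqvne ?_ ?_
              · intro l hl
                by_cases hlj : l = j0
                · subst hlj
                  simp [hrH _ hl, hw1]
                · have hlh : h < (l : ℕ) := by
                    rcases lt_or_eq_of_le hl with hlt | heq
                    · exact hlt
                    · exact absurd (Fin.ext heq.symm : l = j0) hlj
                  simp [hrH _ hl, hw2 l hlh, Pi.single_eq_of_ne hlj]
              · have heq5 : Pi.single j 1 + Pi.single j0 (((q : ℕ) : ZMod p))
                    + (r + (w - Pi.single j0 (((q : ℕ) : ZMod p))))
                    = r + Pi.single j 1 + w := by abel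
                rwa [heq5]
          · -- r has a non-zero j0 coordinate : contradiction via L2
            exfalso
            refine L2 j hjh ((k : ℕ) : ZMod p)
              (r - Pi.single j0 (((k : ℕ) : ZMod p))) hk0 ?_ ?_
            · intro l hl
              by_cases hlj : l = j0
              · subst hlj
                simp [hrj0]
              · have hlh : h < (l : ℕ) := by
                  rcases lt_or_eq_of_le hl with hlt | heq
                  · exact hlt
                  · exact absurd (Fin.ext heq.symm : l = j0) hlj
                simp [hrtail l hlh, Pi.single_eq_of_ne hlj]
            · have heq6 : Pi.single j 1 + Pi.single j0 (((k : ℕ) : ZMod p))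
                  + (r - Pi.single j0 (((k : ℕ) : ZMod p)))
                  = r + Pi.single j 1 := by abel
              rwa [heq6]
        · -- r lies above a second basis direction : contradiction via IH on r + w
          exfalso
          set ji : Fin n := ⟨h + (i : ℕ), by have := i.isLt; omega⟩ with hjidef
          have hjihlt : h < (ji : ℕ) := by
            rw [hjidef]; simp; omega
          have hjij : (ji : ℕ) < (j : ℕ) := by
            by_contra hge
            have h0 : r ji = 0 := hrt ji (by rw [Fin.le_def]; omega)
            rw [hrione] at h0
            exact one_ne_zero h0
          have hrwRHS := IH (ji : ℕ) (by omega) (r + w) hrwA (by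
            intro l hl hl2
            have hlji : (l : ℕ) ≠ h + (i : ℕ) := by rw [hjidef] at hl2; simp at hl2; omega
            have hwl : w l = 0 := hw2 l (by rw [hjidef] at hl2; simp at hl2; omega)
            simp [hrother l hl hlji, hwl])
          rcases hRHStail (r + w) hrwRHS with ⟨k', _, _, hk't⟩ | ⟨i', hi'0, _, hoth'⟩
          · have h0 := hk't ji hjihlt
            rw [Pi.add_apply, hrione, hw2 ji hjihlt] at h0
            simpa using h0
          · have h0 := hoth' j0 (by simp [hj0def]) (by simp [hj0def]; omega)
            have hrj0' : r j0 = 0 := hrother j0 (by simp [hj0def]) (by simp [hj0def]; omega)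
            rw [Pi.add_apply, hrj0', hw1, zero_add] at h0
            have : (((q : ℕ) : ZMod p)).val = q := ZMod.val_cast_of_lt hq
            rw [h0, ZMod.val_zero] at this
            omega
  -- final assembly
  apply Set.Subset.antisymm
  · intro x hxA
    exact key n x hxA (fun l hl hl2 => absurd l.isLt (by omega))
  · rintro x ((hU1 | hU2) | hU3)
    · obtain ⟨k, hk, hxk⟩ := Set.mem_iUnion₂.1 hU1
      obtain ⟨h1, h2⟩ := (hcos k x).1 hxk
      have hxeq : x = Pi.single j0 ((k : ZMod p))
          + (x - Pi.single j0 ((k : ZMod p))) := by abel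
      rw [hxeq]
      refine A1 k _ (Set.mem_Iio.1 hk) ?_
      intro l hl
      by_cases hlj : l = j0
      · subst hlj; simp [h1]
      · have hlh : h < (l : ℕ) := by
          rcases lt_or_eq_of_le hl with hlt | heq
          · exact hlt
          · exact absurd (Fin.ext heq.symm : l = j0) hlj
        simp [h2 l hlh, Pi.single_eq_of_ne hlj]
    · exact hU2.1
    · obtain ⟨i, hx2⟩ := Set.mem_iUnion.1 hU3
      obtain ⟨hi0, hxm⟩ := Set.mem_iUnion.1 hx2
      exact hxm.1
end

section
/- Let p ≥ 3 be a prime, let q be an integer with 1 ≤ q ≤ p−1, let S, T be positive reals, and let m ≥ 10 be a real number such that T ≤ (m+q)·S/p^m. Then T + (S/p^m)·(q − ((m−3)·q + 2·min(2q, p−1))·log p) < 0, where log denotes the natural logarithm. Consequently, the function m ↦ (2·min(2q, p−1) + (m−3)q)·S/(2p^m) + (m+1)·T/2 is strictly decreasing at such points m. -/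
set_option maxHeartbeats 1000000


theorem statement14 (p q : ℕ) (hp : p.Prime) (hp3 : 3 ≤ p)
    (hq1 : 1 ≤ q) (hq2 : q ≤ p - 1)
    (S T : ℝ) (hS : 0 < S) (hT : 0 < T) (m : ℝ) (hm : 10 ≤ m)
    (hTm : T ≤ (m + q) * S / (p : ℝ) ^ m) :
    T + S / (p : ℝ) ^ m *
        (q - ((m - 3) * q + 2 * ((min (2 * q) (p - 1) : ℕ) : ℝ)) * Real.log p) < 0 ∧
      deriv (fun x : ℝ =>
        (2 * ((min (2 * q) (p - 1) : ℕ) : ℝ) + (x - 3) * q) * S / (2 * (p : ℝ) ^ x) +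
          (x + 1) * T / 2) m < 0 := by
  have hp3' : (3:ℝ) ≤ (p:ℝ) := by exact_mod_cast hp3
  have hP : (0:ℝ) < (p:ℝ) := by linarith
  have hPm : (0:ℝ) < (p:ℝ) ^ m := Real.rpow_pos_of_pos hP m
  have hq1' : (1:ℝ) ≤ (q:ℝ) := by exact_mod_cast hq1
  set M : ℝ := ((min (2 * q) (p - 1) : ℕ) : ℝ) with hM
  set c : ℝ := Real.log p with hcdef
  -- log 3 > 12/11
  have hexp3 : Real.exp ((12:ℝ)/11) < 3 := by
    have h11 : Real.exp ((12:ℝ)/11) ^ (11:ℕ) = Real.exp 12 := by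
      rw [← Real.exp_nat_mul]; norm_num
    have h12 : Real.exp (12:ℝ) = Real.exp 1 ^ (12:ℕ) := by
      rw [← Real.exp_nat_mul]; norm_num
    have he : Real.exp 1 < 2.7182818286 := Real.exp_one_lt_d9
    have hpow : Real.exp ((12:ℝ)/11) ^ (11:ℕ) < 3 ^ (11:ℕ) := by
      rw [h11, h12]
      calc Real.exp 1 ^ (12:ℕ) < 2.7182818286 ^ (12:ℕ) :=
            pow_lt_pow_left₀ he (Real.exp_pos 1).le (by norm_num)
        _ < 3 ^ (11:ℕ) := by norm_num
    exact lt_of_pow_lt_pow_left₀ 11 (by norm_num) hpow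
  have hlog3 : (12:ℝ)/11 < Real.log 3 :=
    (Real.lt_log_iff_exp_lt (by norm_num)).2 hexp3
  have hc : (12:ℝ)/11 < c :=
    lt_of_lt_of_le hlog3 (Real.log_le_log (by norm_num) hp3')
  -- key inequality
  have KI : m + 2 * (q:ℝ) < ((m - 3) * q + 2 * M) * c := by
    rcases le_or_gt (2 * q) (p - 1) with h | h
    · have hMe : M = 2 * (q:ℝ) := by
        rw [hM, min_eq_left h]; push_cast; ring
      rw [hMe]
      have h1 : 2 ≤ (m + 1) * c := by nlinarith
      have h2 : (m + 1) * c - 2 ≤ (q:ℝ) * ((m + 1) * c - 2) := by nlinarith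
      have h3 : (1:ℝ) < (c - 1) * (m + 1) := by nlinarith
      nlinarith
    · have hq2' : (q:ℝ) ≤ M := by
        rw [hM, min_eq_right h.le]
        exact_mod_cast hq2
      have hq2'' : 2 ≤ q := by omega
      have hq2''' : (2:ℝ) ≤ (q:ℝ) := by exact_mod_cast hq2''
      have h1 : 2 ≤ (m - 1) * c := by nlinarith
      have h2 : 2 * ((m - 1) * c - 2) ≤ (q:ℝ) * ((m - 1) * c - 2) := by nlinarith
      have hcpos : 0 < c := by linarith
      nlinarith [mul_le_mul_of_nonneg_right hq2' (le_of_lt hcpos)]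
  have part1 : T + S / (p:ℝ) ^ m *
      ((q:ℝ) - ((m - 3) * q + 2 * M) * c) < 0 := by
    have hfac : S / (p:ℝ) ^ m * (m + 2 * q - ((m - 3) * q + 2 * M) * c) < 0 :=
      mul_neg_of_pos_of_neg (div_pos hS hPm) (by linarith)
    have heq : (m + q) * S / (p:ℝ) ^ m + S / (p:ℝ) ^ m * ((q:ℝ) - ((m - 3) * q + 2 * M) * c)
        = S / (p:ℝ) ^ m * (m + 2 * q - ((m - 3) * q + 2 * M) * c) := by ring
    linarith
  refine ⟨part1, ?_⟩
  -- derivative computation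
  have hexpd : HasDerivAt (fun x : ℝ => (p:ℝ) ^ x) ((p:ℝ) ^ m * c) m :=
    (Real.hasStrictDerivAt_const_rpow hP m).hasDerivAt
  have hden : HasDerivAt (fun x : ℝ => 2 * (p:ℝ) ^ x) (2 * ((p:ℝ) ^ m * c)) m :=
    hexpd.const_mul 2
  have hnum : HasDerivAt (fun x : ℝ => (2 * M + (x - 3) * q) * S) (1 * (q:ℝ) * S) m :=
    ((((hasDerivAt_id m).sub_const 3).mul_const (q:ℝ)).const_add (2 * M)).mul_const S
  have hlin : HasDerivAt (fun x : ℝ => (x + 1) * T / 2) (1 * T / 2) m :=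
    (((hasDerivAt_id m).add_const 1).mul_const T).div_const 2
  have hne : (2 * (p:ℝ) ^ m) ≠ 0 := by positivity
  have hf : HasDerivAt (fun x : ℝ =>
      (2 * M + (x - 3) * q) * S / (2 * (p:ℝ) ^ x) + (x + 1) * T / 2)
      ((1 * (q:ℝ) * S * (2 * (p:ℝ) ^ m) - (2 * M + (m - 3) * q) * S * (2 * ((p:ℝ) ^ m * c)))
        / (2 * (p:ℝ) ^ m) ^ 2 + 1 * T / 2) m :=
    (hnum.div hden hne).add hlin
  rw [hf.deriv]
  have hval : (1 * (q:ℝ) * S * (2 * (p:ℝ) ^ m) - (2 * M + (m - 3) * q) * S * (2 * ((p:ℝ) ^ m * c)))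
        / (2 * (p:ℝ) ^ m) ^ 2 + 1 * T / 2
      = (T + S / (p:ℝ) ^ m * ((q:ℝ) - ((m - 3) * q + 2 * M) * c)) / 2 := by
    field_simp
    ring
  rw [hval]
  linarith
end

section
/- Let p ≥ 3 be an integer, let q be an integer with 2 ≤ q ≤ p−1, and set g(q) = q² + 3q − 2·min(2q, p−1). Then for every real x ≥ 5/2, p^(x − q + √(x² + g(q))) / (x + √(x² + g(q))) ≤ p^(2x − 1) / (2x). -/
theorem statement16 (p q : ℕ) (hp : 3 ≤ p) (hq1 : 2 ≤ q) (hq2 : q ≤ p - 1)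
    (g : ℝ) (hg : g = (q : ℝ) ^ 2 + 3 * q - 2 * ((min (2 * q) (p - 1) : ℕ) : ℝ))
    (x : ℝ) (hx : 5 / 2 ≤ x) :
    (p : ℝ) ^ (x - q + Real.sqrt (x ^ 2 + g)) / (x + Real.sqrt (x ^ 2 + g)) ≤
      (p : ℝ) ^ (2 * x - 1) / (2 * x) := by
  have hq1' : (2 : ℝ) ≤ (q : ℝ) := by exact_mod_cast hq1
  have hminle : ((min (2 * q) (p - 1) : ℕ) : ℝ) ≤ 2 * (q : ℝ) := by
    have h := min_le_left (2 * q) (p - 1)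
    calc ((min (2 * q) (p - 1) : ℕ) : ℝ) ≤ ((2 * q : ℕ) : ℝ) := by exact_mod_cast h
      _ = 2 * (q : ℝ) := by push_cast; ring
  have hminge : (q : ℝ) ≤ ((min (2 * q) (p - 1) : ℕ) : ℝ) := by
    have h : q ≤ min (2 * q) (p - 1) := le_min (by omega) hq2
    exact_mod_cast h
  have hg0 : 0 ≤ g := by rw [hg]; nlinarith
  have hgle : g ≤ (q : ℝ) ^ 2 + q := by rw [hg]; nlinarith
  have hxpos : (0 : ℝ) < x := by linarith
  set s := Real.sqrt (x ^ 2 + g) with hs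
  have hs1 : x ≤ s := (Real.le_sqrt hxpos.le (by nlinarith)) |>.mpr (by nlinarith)
  have hs2 : s ≤ x + q - 1 := by
    rw [hs, show x + (q : ℝ) - 1 = Real.sqrt ((x + q - 1) ^ 2) from
      (Real.sqrt_sq (by nlinarith)).symm]
    exact Real.sqrt_le_sqrt (by nlinarith)
  have hp1 : (1 : ℝ) ≤ (p : ℝ) := by
    have : (3 : ℝ) ≤ (p : ℝ) := by exact_mod_cast hp
    linarith
  exact div_le_div₀ (Real.rpow_nonneg (by linarith) _)
    (Real.rpow_le_rpow_of_exponent_le hp1 (by linarith)) (by linarith) (by linarith)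
end

section
/- Let p ≥ 3 be a prime, and let m ≥ 2 and q with 1 ≤ q ≤ p−1 be integers. Let A = {k·e₁ : 0 ≤ k ≤ q} ∪ {e₂, …, e_m} ⊆ (ZMod p)^m, where e₁, …, e_m is the standard basis. Then |A| = m + q, |A + A| = m(m+1)/2 + q(m−1) + min(2q, p−1), and the affine span of A is all of (ZMod p)^m, of size p^m. -/
open Pointwise

section Aux
variable {p m : ℕ}

lemma aux_one_ne (hp3 : 3 ≤ p) : (1:ZMod p) ≠ 0 := by
  haveI : Fact (1 < p) := ⟨by omega⟩; exact one_ne_zero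

lemma aux_two_ne (hp3 : 3 ≤ p) : (2:ZMod p) ≠ 0 := by
  haveI : NeZero p := ⟨by omega⟩
  intro hc
  rw [show ((2:ZMod p)) = ((2:ℕ):ZMod p) by norm_cast,
    ZMod.natCast_eq_zero_iff] at hc
  have := Nat.le_of_dvd (by norm_num) hc
  omega

lemma aux_two_ne_one (hp3 : 3 ≤ p) : (2:ZMod p) ≠ 1 := by
  intro hc
  have h1 : (1:ZMod p) = 0 := by
    have h0 : (2:ZMod p) - 1 = 0 := by rw [hc]; ring
    calc (1:ZMod p) = 2 - 1 := by ring
    _ = 0 := h0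
  exact aux_one_ne hp3 h1

lemma aux_cast_inj (hp : 0 < p) {a b : ℕ} (ha : a < p) (hb : b < p)
    (h : (a : ZMod p) = b) : a = b := by
  haveI : NeZero p := ⟨hp.ne'⟩
  have h1 := ZMod.val_cast_of_lt ha
  have h2 := ZMod.val_cast_of_lt hb
  rw [h] at h1; omega

lemma nsmul_single_apply (k : ℕ) (i j : Fin m) :
    (k • (Pi.single i 1 : Fin m → ZMod p)) j = if j = i then (k:ZMod p) else 0 := by
  rw [Pi.smul_apply, Pi.single_apply]
  split_ifs <;> simp [nsmul_eq_mul]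

lemma single_apply' (i j : Fin m) :
    (Pi.single i 1 : Fin m → ZMod p) j = if j = i then 1 else 0 := Pi.single_apply ..

/-- If `e a + e b = e c + e d` then `{a,b} = {c,d}` as unordered pairs. -/
lemma aux_pair_eq (hp3 : 3 ≤ p) {a b c d : Fin m}
    (h : (Pi.single a 1 : Fin m → ZMod p) + Pi.single b 1
        = Pi.single c 1 + Pi.single d 1) :
    (a = c ∧ b = d) ∨ (a = d ∧ b = c) := by
  have hx : ∀ t : Fin m, (if t = a then (1:ZMod p) else 0) + (if t = b then 1 else 0)
      = (if t = c then (1:ZMod p) else 0) + (if t = d then 1 else 0) := by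
    intro t
    have := congrFun h t
    simpa [Pi.single_apply] using this
  by_cases hab : a = b
  · subst hab
    have h1 := hx a
    rw [if_pos rfl] at h1
    by_cases hca : a = c <;> by_cases hda : a = d
    · exact Or.inl ⟨hca, hda⟩
    · rw [if_pos hca, if_neg hda] at h1
      exact absurd (by linear_combination h1) (aux_two_ne_one hp3)
    · rw [if_neg hca, if_pos hda] at h1
      exact absurd (by linear_combination h1) (aux_two_ne_one hp3)
    · rw [if_neg hca, if_neg hda] at h1
      exact absurd (by linear_combination h1) (aux_two_ne hp3)
  · have h1 := hx a
    rw [if_pos rfl, if_neg hab] at h1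
    by_cases hca : a = c <;> by_cases hda : a = d
    · rw [if_pos hca, if_pos hda] at h1
      exact absurd (by linear_combination -h1) (aux_two_ne_one hp3)
    · left
      refine ⟨hca, ?_⟩
      have h2 := hx b
      have hbc : ¬ b = c := fun hh => hab (hca.trans hh.symm)
      rw [if_neg (fun hh : b = a => hab hh.symm), if_pos rfl, if_neg hbc] at h2
      by_cases hbd : b = d
      · exact hbd
      · rw [if_neg hbd] at h2
        exact absurd (by linear_combination h2) (aux_one_ne hp3)
    · right
      refine ⟨hda, ?_⟩
      have h2 := hx b
      have hbd : ¬ b = d := fun hh => hab (hda.trans hh.symm)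
      rw [if_neg (fun hh : b = a => hab hh.symm), if_pos rfl, if_neg hbd] at h2
      by_cases hbc : b = c
      · exact hbc
      · rw [if_neg hbc] at h2
        exact absurd (by linear_combination h2) (aux_one_ne hp3)
    · rw [if_neg hca, if_neg hda] at h1
      exact absurd (by linear_combination h1) (aux_one_ne hp3)

end Aux

theorem statement18 (p m q : ℕ) (hp : p.Prime) (hp3 : 3 ≤ p) (hm : 2 ≤ m)
    (hq1 : 1 ≤ q) (hq2 : q ≤ p - 1)
    (A : Set (Fin m → ZMod p))
    (hA : A = {x | ∃ k : ℕ, k ≤ q ∧ x = k • (Pi.single (⟨0, by omega⟩ : Fin m) 1 : Fin m → ZMod p)}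
        ∪ {x | ∃ i : Fin m, (i : ℕ) ≠ 0 ∧ x = (Pi.single i 1 : Fin m → ZMod p)}) :
    A.ncard = m + q ∧
    (A + A).ncard = m * (m + 1) / 2 + q * (m - 1) + min (2 * q) (p - 1) ∧
    affSpan A = Set.univ ∧
    (affSpan A).ncard = p ^ m := by
  haveI : NeZero p := ⟨by omega⟩
  set i0 : Fin m := ⟨0, by omega⟩ with hi0
  set e : Fin m → (Fin m → ZMod p) := fun i => Pi.single i 1 with he_def
  have hine : ∀ i : Fin m, (i : ℕ) ≠ 0 ↔ i ≠ i0 := by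
    intro i
    exact ⟨fun h hh => h (by rw [hh]), fun h hh => h (Fin.ext hh)⟩
  set L : Set (Fin m → ZMod p) := {x | ∃ k : ℕ, k ≤ q ∧ x = k • e i0} with hL
  set E : Set (Fin m → ZMod p) := {x | ∃ i : Fin m, (i:ℕ) ≠ 0 ∧ x = e i} with hE
  have hALE : A = L ∪ E := hA
  -- cardinality of L
  have hLim : L = (fun k : ℕ => k • e i0) '' ↑(Finset.Iic q) := by
    ext x; simp [hL, eq_comm]
  have hLcard : L.ncard = q + 1 := by
    rw [hLim, Set.ncard_image_of_injOn, Set.ncard_coe_finset, Nat.card_Iic]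
    intro a ha b hb hab
    simp only [Finset.coe_Iic, Set.mem_Iic] at ha hb
    have h2 := congrFun hab i0
    simp only [he_def] at h2
    rw [nsmul_single_apply, nsmul_single_apply, if_pos rfl, if_pos rfl] at h2
    exact aux_cast_inj (by omega) (by omega) (by omega) h2
  -- cardinality of E
  have hEim : E = e '' ↑(Finset.univ.erase i0) := by
    ext x
    simp only [hE, Set.mem_setOf_eq, Finset.coe_erase, Set.mem_image,
      Set.mem_diff, Finset.coe_univ, Set.mem_univ, true_and, Set.mem_singleton_iff]
    constructor
    · rintro ⟨i, hi, rfl⟩; exact ⟨i, (hine i).mp hi, rfl⟩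
    · rintro ⟨i, hi, rfl⟩; exact ⟨i, (hine i).mpr hi, rfl⟩
  have heinj : ∀ a b : Fin m, e a = e b → a = b := by
    intro a b hab
    have h2 := congrFun hab a
    simp only [he_def] at h2
    rw [single_apply', single_apply', if_pos rfl] at h2
    by_contra hne
    rw [if_neg hne] at h2
    exact aux_one_ne hp3 h2
  have hEcard : E.ncard = m - 1 := by
    rw [hEim, Set.ncard_image_of_injOn, Set.ncard_coe_finset,
      Finset.card_erase_of_mem (Finset.mem_univ _), Finset.card_fin]
    exact fun a _ b _ hab => heinj a b hab
  -- disjointness of L and E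
  have hdisLE : Disjoint L E := by
    rw [Set.disjoint_left]
    rintro x ⟨k, hk, rfl⟩ ⟨i, hi, hx⟩
    have hi' : i ≠ i0 := (hine i).mp hi
    have h2 := congrFun hx i
    simp only [he_def] at h2
    rw [nsmul_single_apply, single_apply', if_neg hi', if_pos rfl] at h2
    exact aux_one_ne hp3 h2.symm
  have card1 : A.ncard = m + q := by
    rw [hALE, Set.ncard_union_eq hdisLE (Set.toFinite L) (Set.toFinite E),
      hLcard, hEcard]
    omega
  -- the three pieces of A + A
  set P1 : Set (Fin m → ZMod p) := {x | ∃ k : ℕ, k ≤ 2*q ∧ x = k • e i0} with hP1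
  set P2 : Set (Fin m → ZMod p) :=
    {x | ∃ k : ℕ, ∃ i : Fin m, k ≤ q ∧ i ≠ i0 ∧ x = k • e i0 + e i} with hP2
  set P3 : Set (Fin m → ZMod p) :=
    {x | ∃ i j : Fin m, i ≠ i0 ∧ j ≠ i0 ∧ x = e i + e j} with hP3
  -- A + A = P1 ∪ P2 ∪ P3
  have hAA : A + A = P1 ∪ (P2 ∪ P3) := by
    rw [hALE]
    ext x
    constructor
    · rintro hx
      rw [Set.mem_add] at hx
      obtain ⟨a, ha, b, hb, rfl⟩ := hx
      rcases ha with ⟨k, hk, rfl⟩ | ⟨i, hi, rfl⟩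
      · rcases hb with ⟨l, hl, rfl⟩ | ⟨j, hj, rfl⟩
        · left
          exact ⟨k + l, by omega, by rw [add_nsmul]⟩
        · right; left
          exact ⟨k, j, hk, (hine j).mp hj, rfl⟩
      · rcases hb with ⟨l, hl, rfl⟩ | ⟨j, hj, rfl⟩
        · right; left
          exact ⟨l, i, hl, (hine i).mp hi, add_comm _ _⟩
        · right; right
          exact ⟨i, j, (hine i).mp hi, (hine j).mp hj, rfl⟩
    · rintro (⟨k, hk, rfl⟩ | ⟨k, i, hk, hi, rfl⟩ | ⟨i, j, hi, hj, rfl⟩)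
      · have hsplit : k • e i0 = (min k q) • e i0 + (k - min k q) • e i0 := by
          rw [← add_nsmul]
          congr 1; omega
        rw [hsplit]
        exact Set.add_mem_add (Or.inl ⟨min k q, by omega, rfl⟩)
          (Or.inl ⟨k - min k q, by omega, rfl⟩)
      · exact Set.add_mem_add (Or.inl ⟨k, hk, rfl⟩) (Or.inr ⟨i, (hine i).mpr hi, rfl⟩)
      · exact Set.add_mem_add (Or.inr ⟨i, (hine i).mpr hi, rfl⟩)
          (Or.inr ⟨j, (hine j).mpr hj, rfl⟩)
  -- cardinality of P1
  have hP1card : P1.ncard = min (2*q) (p-1) + 1 := by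
    have hP1im : P1 = (fun c : ZMod p => c • e i0) ''
        ((Nat.cast : ℕ → ZMod p) '' Set.Iic (2*q)) := by
      ext x
      simp only [hP1, Set.mem_setOf_eq, Set.mem_image, Set.mem_Iic]
      constructor
      · rintro ⟨k, hk, rfl⟩
        exact ⟨(k : ZMod p), ⟨k, hk, rfl⟩, Nat.cast_smul_eq_nsmul _ _ _⟩
      · rintro ⟨c, ⟨k, hk, rfl⟩, rfl⟩
        exact ⟨k, hk, Nat.cast_smul_eq_nsmul (ZMod p) k (e i0)⟩
    have hinj : Set.InjOn (fun c : ZMod p => c • e i0)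
        ((Nat.cast : ℕ → ZMod p) '' Set.Iic (2*q)) := by
      intro a _ b _ hab
      have h2 := congrFun hab i0
      simp only [he_def, Pi.smul_apply] at h2
      rw [single_apply', if_pos rfl, smul_eq_mul, smul_eq_mul, mul_one, mul_one] at h2
      exact h2
    rw [hP1im, Set.ncard_image_of_injOn hinj]
    by_cases h2q : 2*q + 1 ≤ p
    · have hinj2 : Set.InjOn (Nat.cast : ℕ → ZMod p) (Set.Iic (2*q)) := by
        intro a ha b hb hab
        simp only [Set.mem_Iic] at ha hb
        exact aux_cast_inj (by omega) (by omega) (by omega) hab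
      rw [Set.ncard_image_of_injOn hinj2, ← Finset.coe_Iic, Set.ncard_coe_finset,
        Nat.card_Iic]
      omega
    · have huniv : (Nat.cast : ℕ → ZMod p) '' Set.Iic (2*q) = Set.univ := by
        ext c
        simp only [Set.mem_image, Set.mem_Iic, Set.mem_univ, iff_true]
        exact ⟨c.val, by have := ZMod.val_lt c; omega, ZMod.natCast_rightInverse c⟩
      rw [huniv, Set.ncard_univ, Nat.card_eq_fintype_card, ZMod.card]
      omega
  -- cardinality of P2
  have hP2card : P2.ncard = (q+1) * (m-1) := by
    have hP2im : P2 = (fun ki : ℕ × Fin m => ki.1 • e i0 + e ki.2) ''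
        ↑(Finset.Iic q ×ˢ Finset.univ.erase i0) := by
      ext x
      simp only [hP2, Set.mem_setOf_eq, Finset.coe_product, Set.mem_image,
        Set.mem_prod, Finset.mem_coe, Finset.mem_Iic, Finset.mem_erase,
        Finset.mem_univ, and_true]
      constructor
      · rintro ⟨k, i, hk, hi, rfl⟩; exact ⟨(k, i), ⟨hk, hi⟩, rfl⟩
      · rintro ⟨⟨k, i⟩, ⟨hk, hi⟩, rfl⟩; exact ⟨k, i, hk, hi, rfl⟩
    have hinj : Set.InjOn (fun ki : ℕ × Fin m => ki.1 • e i0 + e ki.2)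
        ↑(Finset.Iic q ×ˢ Finset.univ.erase i0) := by
      rintro ⟨a, i⟩ hai ⟨b, j⟩ hbj hab
      simp only [Finset.coe_product, Set.mem_prod, Finset.mem_coe, Finset.mem_Iic,
        Finset.mem_erase, Finset.mem_univ, and_true] at hai hbj
      obtain ⟨ha, hi⟩ := hai
      obtain ⟨hb, hj⟩ := hbj
      simp only at hab
      have h0 := congrFun hab i0
      simp only [he_def, Pi.add_apply] at h0
      rw [nsmul_single_apply, nsmul_single_apply, single_apply', single_apply',
        if_pos rfl, if_pos rfl, if_neg (Ne.symm hi), if_neg (Ne.symm hj),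
        add_zero, add_zero] at h0
      have hABeq : a = b := aux_cast_inj (by omega) (by omega) (by omega) h0
      subst hABeq
      have hij : e i = e j := by
        have := add_left_cancel hab
        exact this
      rw [Prod.mk.injEq]
      exact ⟨rfl, heinj i j hij⟩
    rw [hP2im, Set.ncard_image_of_injOn hinj, Set.ncard_coe_finset,
      Finset.card_product, Nat.card_Iic,
      Finset.card_erase_of_mem (Finset.mem_univ _), Finset.card_fin]
  -- cardinality of P3
  have hP3card : P3.ncard = m * (m-1) / 2 := by
    set f : Sym2 {i : Fin m // i ≠ i0} → (Fin m → ZMod p) :=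
      Sym2.lift ⟨fun a b => e a.1 + e b.1, fun a b => add_comm _ _⟩ with hf
    have hP3im : P3 = Set.range f := by
      ext x
      simp only [hP3, Set.mem_setOf_eq, Set.mem_range]
      constructor
      · rintro ⟨i, j, hi, hj, rfl⟩
        exact ⟨Sym2.mk (⟨i, hi⟩ : {i : Fin m // i ≠ i0}) ⟨j, hj⟩, rfl⟩
      · rintro ⟨z, rfl⟩
        induction z using Sym2.ind with
        | _ a b => exact ⟨a.1, b.1, a.2, b.2, rfl⟩
    have hfinj : Function.Injective f := by
      intro z w h
      induction z using Sym2.ind with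
      | _ a b =>
        induction w using Sym2.ind with
        | _ c d =>
          simp only [hf, Sym2.lift_mk, he_def] at h
          rcases aux_pair_eq hp3 h with ⟨h1, h2⟩ | ⟨h1, h2⟩
          · rw [Sym2.eq_iff]
            left
            exact ⟨Subtype.ext h1, Subtype.ext h2⟩
          · rw [Sym2.eq_iff]
            right
            exact ⟨Subtype.ext h1, Subtype.ext h2⟩
    have hcsub : Fintype.card {i : Fin m // i ≠ i0} = m - 1 := by
      rw [Fintype.card_subtype_compl, Fintype.card_subtype_eq, Fintype.card_fin]
    rw [hP3im, ← Nat.card_coe_set_eq, Nat.card_range_of_injective hfinj,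
      Nat.card_eq_fintype_card, Sym2.card, hcsub, Nat.choose_two_right]
    have hm1 : m - 1 + 1 = m := by omega
    rw [hm1]
  -- disjointness
  have hd12 : Disjoint P1 P2 := by
    rw [Set.disjoint_left]
    rintro x ⟨k, hk, rfl⟩ ⟨l, i, hl, hi, hx⟩
    have h2 := congrFun hx i
    simp only [he_def, Pi.add_apply] at h2
    rw [nsmul_single_apply, nsmul_single_apply, single_apply',
      if_neg hi, if_neg hi, if_pos rfl, zero_add] at h2
    exact aux_one_ne hp3 h2.symm
  have hd13 : Disjoint P1 P3 := by
    rw [Set.disjoint_left]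
    rintro x ⟨k, hk, rfl⟩ ⟨i, j, hi, hj, hx⟩
    have h2 := congrFun hx i
    simp only [he_def, Pi.add_apply] at h2
    rw [nsmul_single_apply, single_apply', single_apply', if_neg hi, if_pos rfl] at h2
    by_cases hij : i = j
    · rw [if_pos hij] at h2
      exact aux_two_ne hp3 (by linear_combination -h2)
    · rw [if_neg hij, add_zero] at h2
      exact aux_one_ne hp3 h2.symm
  have hd23 : Disjoint P2 P3 := by
    rw [Set.disjoint_left]
    rintro x ⟨k, i, hk, hi, rfl⟩ ⟨c, d, hc, hd, hx⟩
    -- evaluate at i0 : k ≡ 0, so k = 0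
    have h0 := congrFun hx i0
    simp only [he_def, Pi.add_apply] at h0
    rw [nsmul_single_apply, single_apply', single_apply', single_apply',
      if_pos rfl, if_neg (Ne.symm hi), if_neg (Ne.symm hc), if_neg (Ne.symm hd),
      add_zero, add_zero] at h0
    have h0' : ((k:ℕ) : ZMod p) = ((0:ℕ) : ZMod p) := by exact_mod_cast h0
    have hk0 : k = 0 := aux_cast_inj (by omega) (by omega) (by omega) h0'
    subst hk0
    have hx' : e i = e c + e d := by
      rw [← hx, zero_smul, zero_add]
    have h2 := congrFun hx' c
    simp only [he_def, Pi.add_apply] at h2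
    rw [single_apply', single_apply', single_apply', if_pos rfl] at h2
    by_cases hic : c = i
    · rw [if_pos hic] at h2
      have hcd : ¬ c = d := by
        intro hcd
        rw [if_pos hcd] at h2
        exact aux_two_ne_one hp3 (by linear_combination -h2)
      rw [if_neg hcd, add_zero] at h2
      -- h2 : 1 = 1, fine; now evaluate at d
      have h3 := congrFun hx' d
      simp only [he_def, Pi.add_apply] at h3
      rw [single_apply', single_apply', single_apply', if_pos rfl,
        if_neg (fun hh : d = c => hcd hh.symm)] at h3
      have hdi : ¬ d = i := fun hh => hcd (hic.trans hh.symm)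
      rw [if_neg hdi, zero_add] at h3
      exact aux_one_ne hp3 h3.symm
    · rw [if_neg hic] at h2
      by_cases hcd : c = d
      · rw [if_pos hcd] at h2
        exact aux_two_ne hp3 (by linear_combination -h2)
      · rw [if_neg hcd, add_zero] at h2
        exact aux_one_ne hp3 h2.symm
  -- cardinality of A + A
  have card2 : (A + A).ncard = m * (m + 1) / 2 + q * (m - 1) + min (2 * q) (p - 1) := by
    rw [hAA, Set.ncard_union_eq (by
        rw [Set.disjoint_union_right]; exact ⟨hd12, hd13⟩)
      (Set.toFinite _) (Set.toFinite _),
      Set.ncard_union_eq hd23 (Set.toFinite _) (Set.toFinite _),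
      hP1card, hP2card, hP3card]
    have e1 : (q+1) * (m-1) = q * (m-1) + (m-1) := by ring
    have e2 : m * (m+1) / 2 = m * (m-1) / 2 + m := by
      have h : m * (m+1) = m * (m-1) + 2 * m := by
        cases m with
        | zero => omega
        | succ n => simp [Nat.succ_sub_one]; ring
      omega
    rw [e1, e2]
    omega
  -- affine span
  have hzero : (0 : Fin m → ZMod p) ∈ A := by
    rw [hALE]; left; exact ⟨0, by omega, by simp⟩
  have hei : ∀ i : Fin m, e i ∈ A := by
    intro i
    rw [hALE]
    by_cases hi : i = i0
    · left; exact ⟨1, by omega, by rw [hi, one_smul]⟩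
    · right; exact ⟨i, (hine i).mpr hi, rfl⟩
  have haff : affSpan A = Set.univ := by
    apply Set.eq_univ_of_forall
    intro x
    intro C hC
    obtain ⟨hAC, H, g, rfl⟩ := hC
    have hgH : g ∈ H := by
      obtain ⟨h, hh, hgh⟩ := hAC hzero
      have : g = -h := by
        have : g + h = 0 := hgh
        linear_combination this
      rw [this]
      exact H.neg_mem hh
    have hHe : ∀ i : Fin m, e i ∈ H := by
      intro i
      obtain ⟨h, hh, hgh⟩ := hAC (hei i)
      have : e i = g + h := hgh.symm
      rw [this]
      exact H.add_mem hgH hh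
    have hxH : x ∈ H := by
      have hxsum : x = ∑ i : Fin m, (x i).val • e i := by
        ext j
        rw [Finset.sum_apply]
        have : ∀ i : Fin m, ((x i).val • e i) j
            = if j = i then ((x i).val : ZMod p) else 0 := by
          intro i; simp only [he_def]; rw [nsmul_single_apply]
        rw [Finset.sum_congr rfl (fun i _ => this i)]
        rw [Finset.sum_ite_eq (Finset.univ) j (fun i => ((x i).val : ZMod p))]
        rw [if_pos (Finset.mem_univ j)]
        exact (ZMod.natCast_rightInverse (x j)).symm
      rw [hxsum]
      exact AddSubgroup.sum_mem _ (fun i _ => AddSubgroup.nsmul_mem _ (hHe i) _)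
    exact ⟨-g + x, H.add_mem (H.neg_mem hgH) hxH, by simp [vadd_eq_add]⟩
  have card4 : (affSpan A).ncard = p ^ m := by
    rw [haff, Set.ncard_univ, Nat.card_eq_fintype_card]
    simp [ZMod.card]
  exact ⟨card1, card2, haff, card4⟩
end

section
/- Let A = {0, e₁, 2e₁, e₂} ⊆ (ZMod 3)², where e₁, e₂ is the standard basis. Then |A| = 4, |A + A| = 7 (so the doubling constant of A is K = 7/4), and the affine span of A is all of (ZMod 3)², of size 9; moreover 9/4 > 3^(2K−2)/(2K−1) for K = 7/4. -/
open Pointwise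

theorem statement19 (A : Set (Fin 2 → ZMod 3))
    (hA : A = {0, (Pi.single 0 1 : Fin 2 → ZMod 3), (Pi.single 0 2 : Fin 2 → ZMod 3),
      (Pi.single 1 1 : Fin 2 → ZMod 3)}) :
    A.ncard = 4 ∧
    (A + A).ncard = 7 ∧
    affSpan A = Set.univ ∧
    (affSpan A).ncard = 9 ∧
    (3 : ℝ) ^ (2 * (7 / 4 : ℝ) - 2) / (2 * (7 / 4 : ℝ) - 1) < 9 / 4 := by
  have hAs : A = (↑({0, (Pi.single 0 1 : Fin 2 → ZMod 3), (Pi.single 0 2 : Fin 2 → ZMod 3),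
      (Pi.single 1 1 : Fin 2 → ZMod 3)} : Finset (Fin 2 → ZMod 3)) : Set (Fin 2 → ZMod 3)) := by
    rw [hA]; simp
  have hspan : affSpan A = Set.univ := by
    apply Set.eq_univ_of_univ_subset
    intro x _
    intro C hC
    obtain ⟨hAC, H, g, rfl⟩ := hC
    have hmem : ∀ y ∈ A, ∃ b ∈ H, g + b = y := by
      intro y hy
      obtain ⟨b, hb, hgb⟩ := hAC hy
      exact ⟨b, hb, hgb⟩
    obtain ⟨b0, hb0, hgb0⟩ := hmem 0 (by rw [hA]; left; rfl)
    have hg : g ∈ H := by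
      have : g = -b0 := by linear_combination (norm := abel) hgb0
      rw [this]; exact neg_mem hb0
    obtain ⟨b1, hb1, hgb1⟩ := hmem (Pi.single 0 1) (by rw [hA]; right; left; rfl)
    obtain ⟨b2, hb2, hgb2⟩ := hmem (Pi.single 1 1) (by rw [hA]; right; right; right; rfl)
    have he1 : (Pi.single 0 1 : Fin 2 → ZMod 3) ∈ H := by
      rw [← hgb1]; exact add_mem hg hb1
    have he2 : (Pi.single 1 1 : Fin 2 → ZMod 3) ∈ H := by
      rw [← hgb2]; exact add_mem hg hb2
    have hx : x = (x 0).val • (Pi.single 0 1 : Fin 2 → ZMod 3)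
        + (x 1).val • (Pi.single 1 1 : Fin 2 → ZMod 3) := by
      revert x
      decide
    have hxH : x ∈ H := by
      rw [hx]; exact add_mem (nsmul_mem he1 _) (nsmul_mem he2 _)
    exact ⟨x - g, sub_mem hxH hg, by simp only [vadd_eq_add]; abel⟩
  refine ⟨?_, ?_, hspan, ?_, ?_⟩
  · rw [hAs, Set.ncard_coe_finset]; decide
  · rw [hAs, ← Finset.coe_add, Set.ncard_coe_finset]; decide
  · rw [hspan, Set.ncard_univ, Nat.card_eq_fintype_card]; decide
  · have h1 : 2 * (7 / 4 : ℝ) - 2 = 3 / 2 := by norm_num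
    have h2 : 2 * (7 / 4 : ℝ) - 1 = 5 / 2 := by norm_num
    rw [h1, h2, div_lt_iff₀ (by norm_num)]
    have hsq : ((3 : ℝ) ^ (3 / 2 : ℝ)) ^ (2 : ℕ) = 27 := by
      rw [← Real.rpow_natCast ((3 : ℝ) ^ (3 / 2 : ℝ)) 2, ← Real.rpow_mul (by norm_num)]
      norm_num
    nlinarith [Real.rpow_nonneg (by norm_num : (0:ℝ) ≤ 3) (3 / 2)]
end
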